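/- arXiv:2501.09995 — 14 statements merged into one kernel-verified Lean document; each statement's English description precedes it below -/
import Mathlib

section
/- Let r and ω be real numbers with 0 < r < 1 and 0 < ω < 2. Then every complex root α of the quadratic equation α² − rωα + (ω − 1) = 0 satisfies |α| < 1. -/
/-- Every complex root `α` of the SOR characteristic quadratic
`α² − rωα + (ω − 1) = 0` with `0 < r < 1` and `0 < ω < 2` satisfies `|α| < 1`. -/
theorem sor_quadratic_roots_lt_one
    (r ω : ℝ) (hr0 : 0 < r) (hr1 : r < 1) (hω0 : 0 < ω) (hω2 : ω < 2)
    (α : ℂ) (hα : α ^ 2 - (r : ℂ) * (ω : ℂ) * α + ((ω : ℂ) - 1) = 0) :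
    ‖α‖ < 1 := by
  set x := α.re with hx
  set y := α.im with hy
  have hre : x * x - y * y - r * ω * x + (ω - 1) = 0 := by
    have := congrArg Complex.re hα
    simp [pow_two, Complex.mul_re, Complex.sub_re, Complex.add_re] at this
    linarith [this]
  have him : (2 * x - r * ω) * y = 0 := by
    have := congrArg Complex.im hα
    simp [pow_two, Complex.mul_im, Complex.sub_im, Complex.add_im] at this
    ring_nf
    ring_nf at this
    linarith [this]
  have hsq : ‖α‖ ^ 2 = x * x + y * y := by
    rw [Complex.sq_norm, Complex.normSq_apply]
  have hsqlt : ‖α‖ ^ 2 < 1 := by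
    rw [hsq]
    rcases mul_eq_zero.mp him with h | h
    · -- x = r*ω/2
      have hx2 : x = r * ω / 2 := by linarith
      have hxx : r * ω * x = 2 * x * x := by rw [hx2]; ring
      linarith
    · -- y = 0, real root
      have h1 : x * x - r * ω * x + (ω - 1) = 0 := by nlinarith [h]
      have hrw : r * ω < 2 := by nlinarith
      have hx1 : x < 1 := by
        by_contra hc
        push_neg at hc
        have h2 : 0 ≤ (x - 1) * (x + 1 - r * ω) := mul_nonneg (by linarith) (by linarith)
        nlinarith
      have hx2 : -1 < x := by
        by_contra hc
        push_neg at hc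
        have h2 : 0 ≤ (-x - 1) * (r * ω) := mul_nonneg (by linarith) (by positivity)
        nlinarith [sq_nonneg (x + 1)]
      rw [h]
      nlinarith [mul_pos (by linarith : (0:ℝ) < 1 - x) (by linarith : (0:ℝ) < 1 + x)]
  nlinarith [norm_nonneg α, hsqlt]
end

section
/- Let r be a real number with 0 < r < 1 and set ω* = 2/(1 + √(1 − r²)). Then for every real ω with 0 < ω < 2 there exists a complex root α of α² − rωα + (ω − 1) = 0 with |α|² ≥ ω* − 1. Hence the spectral radius ω* − 1 attained at ω = ω* is optimal: no choice of ω in (0,2) makes both roots smaller in modulus than √(ω* − 1). -/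
set_option maxHeartbeats 1000000

/-- For `0 < r < 1` and `ω* = 2/(1 + √(1 − r²))`: for every `ω ∈ (0, 2)` there is a
complex root `α` of `α² − rωα + (ω − 1) = 0` with `|α|² ≥ ω* − 1`; i.e. the spectral
radius `ω* − 1` attained at `ω = ω*` is optimal. -/
theorem sor_optimal_relaxation_is_optimal
    (r : ℝ) (hr0 : 0 < r) (hr1 : r < 1)
    (ωs : ℝ) (hωs : ωs = 2 / (1 + Real.sqrt (1 - r ^ 2))) :
    ∀ ω : ℝ, 0 < ω → ω < 2 →
      ∃ α : ℂ, α ^ 2 - (r : ℂ) * (ω : ℂ) * α + ((ω : ℂ) - 1) = 0 ∧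
        ωs - 1 ≤ ‖α‖ ^ 2 := by
  intro ω hω0 hω2
  set t := Real.sqrt (1 - r ^ 2) with htdef
  have ht2 : t ^ 2 = 1 - r ^ 2 := Real.sq_sqrt (by nlinarith)
  have ht0 : 0 < t := Real.sqrt_pos.mpr (by nlinarith)
  have ht1 : t < 1 := by nlinarith
  have h1 : ωs * (1 + t) = 2 := by rw [hωs]; field_simp
  have hωs1 : 1 < ωs := by nlinarith
  have hωs2 : ωs < 2 := by nlinarith
  have hkey : r ^ 2 * ωs ^ 2 = 4 * ωs - 4 := by
    linear_combination (ωs ^ 2) * ht2 - (t * ωs + 2 - ωs) * h1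
  have hrωs : r ^ 2 * ωs < 2 := by nlinarith
  set s := r * ωs / 2 with hsdef
  have hs0 : 0 < s := by positivity
  have hs2 : s ^ 2 = ωs - 1 := by rw [hsdef]; nlinarith [hkey]
  rcases le_or_gt 0 (r ^ 2 * ω ^ 2 - 4 * ω + 4) with hDv | hDv
  · -- real roots, ω ≤ ωs
    have hle : ω ≤ ωs := by
      by_contra h
      push_neg at h
      nlinarith [mul_pos (sub_pos.mpr h) (by nlinarith : (0:ℝ) < 4 - r ^ 2 * (ω + ωs))]
    set q := Real.sqrt (r ^ 2 * ω ^ 2 - 4 * ω + 4) with hqdef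
    have hq0 : 0 ≤ q := Real.sqrt_nonneg _
    have hq2 : q ^ 2 = r ^ 2 * ω ^ 2 - 4 * ω + 4 := Real.sq_sqrt hDv
    refine ⟨(((r * ω + q) / 2 : ℝ) : ℂ), ?_, ?_⟩
    · have hq2c : (q : ℂ) ^ 2 = (r : ℂ) ^ 2 * (ω : ℂ) ^ 2 - 4 * (ω : ℂ) + 4 := by
        exact_mod_cast hq2
      push_cast
      linear_combination hq2c / 4
    · have ha0 : (0:ℝ) ≤ (r * ω + q) / 2 := by nlinarith
      rw [Complex.norm_real, Real.norm_of_nonneg ha0]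
      -- key: s ≤ (r*ω+q)/2
      have hgs : s ^ 2 - r * ω * s + ω - 1 ≤ 0 := by
        have hprod : 0 ≤ (ωs - ω) * (2 - r ^ 2 * ωs) :=
          mul_nonneg (by linarith) (by linarith)
        have hrs : r * ω * s = r ^ 2 * ω * ωs / 2 := by rw [hsdef]; ring
        nlinarith [hs2, hkey, hprod, hrs]
      have hsle : s ≤ (r * ω + q) / 2 := by
        rcases le_or_gt (2 * s - r * ω) 0 with h | h
        · linarith
        · have hsq : (2 * s - r * ω) ^ 2 ≤ r ^ 2 * ω ^ 2 - 4 * ω + 4 := by nlinarith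
          have := Real.sqrt_le_sqrt hsq
          rw [Real.sqrt_sq h.le] at this
          linarith
      calc ωs - 1 = s ^ 2 := hs2.symm
        _ ≤ ((r * ω + q) / 2) ^ 2 := pow_le_pow_left₀ hs0.le hsle 2
  · -- complex roots, ω ≥ ωs
    have hge : ωs ≤ ω := by
      by_contra h
      push_neg at h
      nlinarith [mul_pos (sub_pos.mpr h) (by nlinarith : (0:ℝ) < 4 - r ^ 2 * (ω + ωs))]
    have hD' : (0:ℝ) ≤ 4 * ω - 4 - r ^ 2 * ω ^ 2 := by linarith
    set q := Real.sqrt (4 * ω - 4 - r ^ 2 * ω ^ 2) with hqdef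
    have hq2 : q ^ 2 = 4 * ω - 4 - r ^ 2 * ω ^ 2 := Real.sq_sqrt hD'
    refine ⟨((r * ω / 2 : ℝ) : ℂ) + ((q / 2 : ℝ) : ℂ) * Complex.I, ?_, ?_⟩
    · have hq2c : (q : ℂ) ^ 2 = 4 * (ω : ℂ) - 4 - (r : ℂ) ^ 2 * (ω : ℂ) ^ 2 := by
        exact_mod_cast hq2
      push_cast
      linear_combination ((q : ℂ) / 2) ^ 2 * Complex.I_sq - hq2c / 4
    · rw [Complex.sq_norm, Complex.normSq_add_mul_I]
      nlinarith [hq2]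
end

section
/- Let β > 0 and ω be real numbers, let Nx, Ny be positive integers, let nx, ny be integers, and set θx = nxπ/Nx, θy = nyπ/Ny and r = (cos θx + β² cos θy)/(1 + β²). Let α be a complex number satisfying α² − rωα + (ω − 1) = 0, and define w(i,j) = α^{i+j} · sin(i θx) · sin(j θy) for natural numbers i, j. Then: (a) for all i ≥ 1 and j ≥ 1, α² w(i,j) = (1 − ω) w(i,j) + (ω/(2(1 + β²))) · (α² w(i−1,j) + w(i+1,j) + β² (α² w(i,j−1) + w(i,j+1))); and (b) w(0,j) = w(Nx,j) = w(i,0) = w(i,Ny) = 0 for all i, j. -/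
lemma sin_step (t θ : ℝ) :
    Real.sin (t*θ) + Real.sin ((t+2)*θ) = 2 * Real.cos θ * Real.sin ((t+1)*θ) := by
  rw [show (t+2)*θ = t*θ + 2*θ by ring, show (t+1)*θ = t*θ + θ by ring,
    Real.sin_add, Real.sin_add, Real.cos_two_mul, Real.sin_two_mul]
  ring

/-- Separated-variables eigenfunction relation for the point SOR iteration of the
central second-order discretization of the Poisson equation, together with the
homogeneous Dirichlet boundary values. -/
theorem point_sor_second_order_eigenrelation
    (β ω : ℝ) (hβ : 0 < β)
    (Nx Ny : ℕ) (hNx : 0 < Nx) (hNy : 0 < Ny)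
    (nx ny : ℤ)
    (θx θy r : ℝ)
    (hθx : θx = nx * Real.pi / Nx) (hθy : θy = ny * Real.pi / Ny)
    (hr : r = (Real.cos θx + β ^ 2 * Real.cos θy) / (1 + β ^ 2))
    (α : ℂ) (hα : α ^ 2 - (r : ℂ) * (ω : ℂ) * α + ((ω : ℂ) - 1) = 0)
    (w : ℕ → ℕ → ℂ)
    (hw : ∀ i j : ℕ,
      w i j = α ^ (i + j) * (Real.sin (i * θx) : ℂ) * (Real.sin (j * θy) : ℂ)) :
    (∀ i j : ℕ, 1 ≤ i → 1 ≤ j →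
      α ^ 2 * w i j
        = (1 - (ω : ℂ)) * w i j
          + ((ω : ℂ) / (2 * (1 + (β : ℂ) ^ 2)))
            * (α ^ 2 * w (i - 1) j + w (i + 1) j
              + (β : ℂ) ^ 2 * (α ^ 2 * w i (j - 1) + w i (j + 1)))) ∧
    (∀ i j : ℕ, w 0 j = 0 ∧ w Nx j = 0 ∧ w i 0 = 0 ∧ w i Ny = 0) := by
  have hβpos : (0:ℝ) < 1 + β ^ 2 := by positivity
  have h1 : (1:ℂ) + (β:ℂ) ^ 2 ≠ 0 := by
    have : ((1 + β ^ 2 : ℝ) : ℂ) ≠ 0 := by exact_mod_cast hβpos.ne'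
    push_cast at this; exact this
  have hr' : (r:ℂ) * (1 + (β:ℂ) ^ 2)
      = (Real.cos θx : ℂ) + (β:ℂ) ^ 2 * (Real.cos θy : ℂ) := by
    have : r * (1 + β ^ 2) = Real.cos θx + β ^ 2 * Real.cos θy := by
      rw [hr]; field_simp
    exact_mod_cast this
  constructor
  · intro i j hi hj
    obtain ⟨a, rfl⟩ : ∃ a, i = a + 1 := ⟨i - 1, by omega⟩
    obtain ⟨b, rfl⟩ : ∃ b, j = b + 1 := ⟨j - 1, by omega⟩
    simp only [Nat.add_sub_cancel]
    have hx : ((Real.sin (a * θx) : ℂ) + (Real.sin ((a + 2 : ℕ) * θx) : ℂ))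
        = 2 * (Real.cos θx : ℂ) * (Real.sin ((a + 1 : ℕ) * θx) : ℂ) := by
      push_cast
      exact_mod_cast sin_step (a : ℝ) θx
    have hy : ((Real.sin (b * θy) : ℂ) + (Real.sin ((b + 2 : ℕ) * θy) : ℂ))
        = 2 * (Real.cos θy : ℂ) * (Real.sin ((b + 1 : ℕ) * θy) : ℂ) := by
      push_cast
      exact_mod_cast sin_step (b : ℝ) θy
    have key1 : α ^ 2 * w a (b+1) + w (a+2) (b+1)
        = 2 * (Real.cos θx : ℂ) * α * w (a+1) (b+1) := by
      rw [hw, hw, hw]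
      linear_combination (α ^ (a + b + 3) * (Real.sin ((b + 1 : ℕ) * θy) : ℂ)) * hx
    have key2 : α ^ 2 * w (a+1) b + w (a+1) (b+2)
        = 2 * (Real.cos θy : ℂ) * α * w (a+1) (b+1) := by
      rw [hw, hw, hw]
      linear_combination (α ^ (a + b + 3) * (Real.sin ((a + 1 : ℕ) * θx) : ℂ)) * hy
    rw [key1, key2]
    field_simp
    simp only [Complex.ofReal_cos] at hr' ⊢
    linear_combination ((1 + (β:ℂ) ^ 2) * w (a+1) (b+1)) * hα
      + ((ω:ℂ) * α * w (a+1) (b+1)) * hr'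
  · intro i j
    have hNx0 : (Nx : ℝ) ≠ 0 := Nat.cast_ne_zero.mpr hNx.ne'
    have hNy0 : (Ny : ℝ) ≠ 0 := Nat.cast_ne_zero.mpr hNy.ne'
    have hsx : Real.sin ((Nx : ℝ) * θx) = 0 := by
      rw [hθx, show (Nx:ℝ) * ((nx:ℝ) * Real.pi / Nx) = nx * Real.pi by field_simp]
      exact Real.sin_int_mul_pi nx
    have hsy : Real.sin ((Ny : ℝ) * θy) = 0 := by
      rw [hθy, show (Ny:ℝ) * ((ny:ℝ) * Real.pi / Ny) = ny * Real.pi by field_simp]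
      exact Real.sin_int_mul_pi ny
    refine ⟨?_, ?_, ?_, ?_⟩ <;> rw [hw] <;> simp [hsx, hsy]
end

section
/- Let β > 0 and ω be real numbers, let Nx, Ny be positive integers, let nx, ny be integers, and set θx = nxπ/Nx, θy = nyπ/Ny and r = β² cos θy / (1 + β² − cos θx). Let α be a complex number satisfying α² − rωα + (ω − 1) = 0, and define w(i,j) = α^{j} · sin(i θx) · sin(j θy) for natural numbers i, j. Then for all i ≥ 1 and j ≥ 1: α² (2(1 + β²) w(i,j) − w(i−1,j) − w(i+1,j)) = (1 − ω)(2(1 + β²) w(i,j) − w(i−1,j) − w(i+1,j)) + ω β² (α² w(i,j−1) + w(i,j+1)), and moreover w(0,j) = w(Nx,j) = w(i,0) = w(i,Ny) = 0. -/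
/-- Separated-variables eigenfunction relation for the line SOR iteration of the
central second-order discretization of the Poisson equation, together with the
homogeneous Dirichlet boundary values. -/
theorem line_sor_second_order_eigenrelation
    (β ω : ℝ) (hβ : 0 < β)
    (Nx Ny : ℕ) (hNx : 0 < Nx) (hNy : 0 < Ny)
    (nx ny : ℤ)
    (θx θy r : ℝ)
    (hθx : θx = nx * Real.pi / Nx) (hθy : θy = ny * Real.pi / Ny)
    (hr : r = β ^ 2 * Real.cos θy / (1 + β ^ 2 - Real.cos θx))
    (α : ℂ) (hα : α ^ 2 - (r : ℂ) * (ω : ℂ) * α + ((ω : ℂ) - 1) = 0)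
    (w : ℕ → ℕ → ℂ)
    (hw : ∀ i j : ℕ,
      w i j = α ^ j * (Real.sin (i * θx) : ℂ) * (Real.sin (j * θy) : ℂ)) :
    (∀ i j : ℕ, 1 ≤ i → 1 ≤ j →
      α ^ 2 * (2 * (1 + (β : ℂ) ^ 2) * w i j - w (i - 1) j - w (i + 1) j)
        = (1 - (ω : ℂ)) * (2 * (1 + (β : ℂ) ^ 2) * w i j - w (i - 1) j - w (i + 1) j)
          + (ω : ℂ) * (β : ℂ) ^ 2 * (α ^ 2 * w i (j - 1) + w i (j + 1))) ∧
    (∀ i j : ℕ, w 0 j = 0 ∧ w Nx j = 0 ∧ w i 0 = 0 ∧ w i Ny = 0) := by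
  have hD : (1 + β ^ 2 - Real.cos θx) ≠ 0 := by
    nlinarith [Real.cos_le_one θx, sq_nonneg β]
  have hrD : r * (1 + β ^ 2 - Real.cos θx) = β ^ 2 * Real.cos θy := by
    rw [hr]; field_simp
  have hrDC : (r : ℂ) * (1 + (β : ℂ) ^ 2 - (Real.cos θx : ℂ))
      = (β : ℂ) ^ 2 * (Real.cos θy : ℂ) := by
    exact_mod_cast congrArg Complex.ofReal hrD
  constructor
  · intro i j hi hj
    obtain ⟨k, rfl⟩ : ∃ k, i = k + 1 := ⟨i - 1, (Nat.succ_pred_eq_of_pos hi).symm⟩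
    obtain ⟨l, rfl⟩ : ∃ l, j = l + 1 := ⟨j - 1, (Nat.succ_pred_eq_of_pos hj).symm⟩
    have hx : Real.sin (k * θx) + Real.sin ((k + 1 + 1 : ℕ) * θx)
        = 2 * Real.cos θx * Real.sin ((k + 1 : ℕ) * θx) := by
      push_cast
      have e1 : ((k : ℝ) + 1 + 1) * θx = ((k : ℝ) + 1) * θx + θx := by ring
      have e2 : (k : ℝ) * θx = ((k : ℝ) + 1) * θx - θx := by ring
      rw [e1, e2, Real.sin_add, Real.sin_sub]; ring
    have hy : Real.sin (l * θy) + Real.sin ((l + 1 + 1 : ℕ) * θy)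
        = 2 * Real.cos θy * Real.sin ((l + 1 : ℕ) * θy) := by
      push_cast
      have e1 : ((l : ℝ) + 1 + 1) * θy = ((l : ℝ) + 1) * θy + θy := by ring
      have e2 : (l : ℝ) * θy = ((l : ℝ) + 1) * θy - θy := by ring
      rw [e1, e2, Real.sin_add, Real.sin_sub]; ring
    have hxC : (Real.sin (k * θx) : ℂ) + (Real.sin ((k + 1 + 1 : ℕ) * θx) : ℂ)
        = 2 * (Real.cos θx : ℂ) * (Real.sin ((k + 1 : ℕ) * θx) : ℂ) := by
      exact_mod_cast congrArg Complex.ofReal hx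
    have hyC : (Real.sin (l * θy) : ℂ) + (Real.sin ((l + 1 + 1 : ℕ) * θy) : ℂ)
        = 2 * (Real.cos θy : ℂ) * (Real.sin ((l + 1 : ℕ) * θy) : ℂ) := by
      exact_mod_cast congrArg Complex.ofReal hy
    simp only [hw, Nat.add_sub_cancel]
    set S := (Real.sin ((k + 1 : ℕ) * θx) : ℂ)
    set T := (Real.sin ((l + 1 : ℕ) * θy) : ℂ)
    set Sk := (Real.sin (k * θx) : ℂ)
    set Tl := (Real.sin (l * θy) : ℂ)
    set cx := (Real.cos θx : ℂ)
    set cy := (Real.cos θy : ℂ)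
    linear_combination
      (-(α ^ 2 - 1 + (ω : ℂ)) * α ^ (l + 1) * T) * hxC
      + (-(ω : ℂ) * (β : ℂ) ^ 2 * α ^ (l + 2) * S) * hyC
      + (2 * (1 + (β : ℂ) ^ 2 - cx) * α ^ (l + 1) * S * T) * hα
      + (2 * (ω : ℂ) * α ^ (l + 2) * S * T) * hrDC
  · intro i j
    have hNx' : (Nx : ℝ) ≠ 0 := Nat.cast_ne_zero.mpr hNx.ne'
    have hNy' : (Ny : ℝ) ≠ 0 := Nat.cast_ne_zero.mpr hNy.ne'
    have hsx : Real.sin ((Nx : ℝ) * θx) = 0 := by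
      have : (Nx : ℝ) * θx = nx * Real.pi := by rw [hθx]; field_simp
      rw [this, Real.sin_int_mul_pi]
    have hsy : Real.sin ((Ny : ℝ) * θy) = 0 := by
      have : (Ny : ℝ) * θy = ny * Real.pi := by rw [hθy]; field_simp
      rw [this, Real.sin_int_mul_pi]
    refine ⟨?_, ?_, ?_, ?_⟩ <;> simp [hw, hsx, hsy]
end

section
/- Let β > 0 and ω be real numbers, let Nx, Ny be positive integers, let nx, ny be integers, and set θx = nxπ/Nx, θy = nyπ/Ny and r = ((5β² − 1 + (1 + β²) cos θx)/(5(1 + β²) − (5 − β²) cos θx)) · cos θy. Let α be a complex number satisfying α² − rωα + (ω − 1) = 0, and define w(i,j) = α^{j} · sin(i θx) · sin(j θy) for natural numbers i, j. Then for all i ≥ 1 and j ≥ 1: α² (20(1 + β²) w(i,j) − (10 − 2β²)(w(i−1,j) + w(i+1,j))) = (1 − ω)(20(1 + β²) w(i,j) − (10 − 2β²)(w(i−1,j) + w(i+1,j))) + ω ((10β² − 2)(α² w(i,j−1) + w(i,j+1)) + (1 + β²)(α²(w(i−1,j−1) + w(i+1,j−1)) + w(i−1,j+1) + w(i+1,j+1))).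 -/
set_option maxHeartbeats 1600000


/-- Separated-variables eigenfunction relation for the line SOR iteration of the
9-point high-order compact (HOC) discretization of the Poisson equation. -/
theorem line_sor_hoc_eigenrelation
    (β ω : ℝ) (hβ : 0 < β)
    (Nx Ny : ℕ) (hNx : 0 < Nx) (hNy : 0 < Ny)
    (nx ny : ℤ)
    (θx θy r : ℝ)
    (hθx : θx = nx * Real.pi / Nx) (hθy : θy = ny * Real.pi / Ny)
    (hr : r = (5 * β ^ 2 - 1 + (1 + β ^ 2) * Real.cos θx)
        / (5 * (1 + β ^ 2) - (5 - β ^ 2) * Real.cos θx) * Real.cos θy)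
    (α : ℂ) (hα : α ^ 2 - (r : ℂ) * (ω : ℂ) * α + ((ω : ℂ) - 1) = 0)
    (w : ℕ → ℕ → ℂ)
    (hw : ∀ i j : ℕ,
      w i j = α ^ j * (Real.sin (i * θx) : ℂ) * (Real.sin (j * θy) : ℂ)) :
    ∀ i j : ℕ, 1 ≤ i → 1 ≤ j →
      α ^ 2 * (20 * (1 + (β : ℂ) ^ 2) * w i j
          - (10 - 2 * (β : ℂ) ^ 2) * (w (i - 1) j + w (i + 1) j))
        = (1 - (ω : ℂ)) * (20 * (1 + (β : ℂ) ^ 2) * w i j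
            - (10 - 2 * (β : ℂ) ^ 2) * (w (i - 1) j + w (i + 1) j))
          + (ω : ℂ) * ((10 * (β : ℂ) ^ 2 - 2) * (α ^ 2 * w i (j - 1) + w i (j + 1))
            + (1 + (β : ℂ) ^ 2) * (α ^ 2 * (w (i - 1) (j - 1) + w (i + 1) (j - 1))
              + w (i - 1) (j + 1) + w (i + 1) (j + 1))) := by
  -- denominator positivity and the cleared form of hr
  have hden : (0:ℝ) < 5 * (1 + β ^ 2) - (5 - β ^ 2) * Real.cos θx := by
    nlinarith [Real.neg_one_le_cos θx, Real.cos_le_one θx, sq_nonneg β]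
  have hrden : r * (5 * (1 + β ^ 2) - (5 - β ^ 2) * Real.cos θx)
      = (5 * β ^ 2 - 1 + (1 + β ^ 2) * Real.cos θx) * Real.cos θy := by
    rw [hr, div_mul_eq_mul_div, div_mul_cancel₀ _ hden.ne']
  have hrdenC : (r : ℂ) * (5 * ((1:ℂ) + (β:ℂ) ^ 2) - (5 - (β:ℂ) ^ 2) * (Real.cos θx : ℂ))
      = (5 * (β:ℂ) ^ 2 - 1 + (1 + (β:ℂ) ^ 2) * (Real.cos θx : ℂ)) * (Real.cos θy : ℂ) := by
    exact_mod_cast hrden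
  intro i j hi hj
  obtain ⟨k, rfl⟩ := Nat.exists_eq_add_of_le hi
  obtain ⟨m, rfl⟩ := Nat.exists_eq_add_of_le hj
  simp only [hw, Nat.add_sub_cancel_left]
  have cast1 : ∀ n : ℕ, ((1 + n : ℕ) : ℝ) = 1 + (n:ℝ) := by intro n; push_cast; ring
  have cast2 : ∀ n : ℕ, ((1 + n + 1 : ℕ) : ℝ) = 2 + (n:ℝ) := by intro n; push_cast; ring
  rw [cast1, cast1, cast2, cast2]
  have hX : Real.sin ((2 + (k:ℝ)) * θx)
      = 2 * Real.cos θx * Real.sin ((1 + (k:ℝ)) * θx) - Real.sin ((k:ℝ) * θx) := by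
    have h1 : (2 + (k:ℝ)) * θx = (1 + (k:ℝ)) * θx + θx := by ring
    have h2 : (k:ℝ) * θx = (1 + (k:ℝ)) * θx - θx := by ring
    rw [h1, Real.sin_add, h2, Real.sin_sub]; ring
  have hY : Real.sin ((2 + (m:ℝ)) * θy)
      = 2 * Real.cos θy * Real.sin ((1 + (m:ℝ)) * θy) - Real.sin ((m:ℝ) * θy) := by
    have h1 : (2 + (m:ℝ)) * θy = (1 + (m:ℝ)) * θy + θy := by ring
    have h2 : (m:ℝ) * θy = (1 + (m:ℝ)) * θy - θy := by ring
    rw [h1, Real.sin_add, h2, Real.sin_sub]; ring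
  rw [hX, hY]
  simp only [Complex.ofReal_add, Complex.ofReal_sub, Complex.ofReal_mul,
    Complex.ofReal_ofNat]
  set a0 := (Real.sin ((k:ℝ) * θx) : ℂ)
  set a1 := (Real.sin ((1 + (k:ℝ)) * θx) : ℂ)
  set cX := (Real.cos θx : ℂ)
  set b0 := (Real.sin ((m:ℝ) * θy) : ℂ)
  set b1 := (Real.sin ((1 + (m:ℝ)) * θy) : ℂ)
  set cY := (Real.cos θy : ℂ)
  linear_combination
      (α ^ (1 + m) * a1 * b1 * (4 * (5 * (1 + (β:ℂ) ^ 2) - (5 - (β:ℂ) ^ 2) * cX))) * hα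
    + (α ^ (1 + m) * a1 * b1 * 4 * (ω:ℂ) * α) * hrdenC
end

section
/- Let β > 0 be real, set c₁ = (5 − β²)/(10(1 + β²)) and c₂ = 4/5 − 2c₁. Then for all real p ∈ [0,1] and q ∈ (0,1], the quantity Δ' = (1 + 20c₁c₂)q² + 4c₁²p²q² + 100c₁² is strictly positive. -/
/-- With `c₁ = (5 − β²)/(10(1 + β²))` and `c₂ = 4/5 − 2c₁`, the discriminant
`Δ' = (1 + 20c₁c₂)q² + 4c₁²p²q² + 100c₁²` is strictly positive for
`p ∈ [0,1]` and `q ∈ (0,1]`. -/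
theorem hoc_delta_prime_pos
    (β : ℝ) (hβ : 0 < β)
    (c₁ c₂ : ℝ) (hc₁ : c₁ = (5 - β ^ 2) / (10 * (1 + β ^ 2))) (hc₂ : c₂ = 4 / 5 - 2 * c₁)
    (p q : ℝ) (hp0 : 0 ≤ p) (hp1 : p ≤ 1) (hq0 : 0 < q) (hq1 : q ≤ 1) :
    0 < (1 + 20 * c₁ * c₂) * q ^ 2 + 4 * c₁ ^ 2 * p ^ 2 * q ^ 2 + 100 * c₁ ^ 2 := by
  have hden : (0:ℝ) < 10 * (1 + β ^ 2) := by positivity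
  have hE : c₁ * (10 * (1 + β ^ 2)) = 5 - β ^ 2 := by
    rw [hc₁]; field_simp
  have h1 : 0 < 10 * c₁ + 1 := by nlinarith [sq_nonneg β]
  have h2 : 0 < 6 * c₁ + 1 := by nlinarith [sq_nonneg β]
  subst hc₂
  have hq2 : 0 < q ^ 2 := by positivity
  have hq2' : q ^ 2 ≤ 1 := by nlinarith
  nlinarith [mul_pos (mul_pos h1 h2) hq2, sq_nonneg (c₁ * p * q),
    mul_nonneg (mul_nonneg (sq_nonneg c₁) (sub_nonneg.2 hq2')) (le_of_lt hq2),
    mul_nonneg (sq_nonneg c₁) (sub_nonneg.2 hq2')]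
end

section
/- Let β > 0 be real, set c₁ = (5 − β²)/(10(1 + β²)) and c₂ = 4/5 − 2c₁, and let p, q ∈ [0,1]. With Δ' = (1 + 20c₁c₂)q² + 4c₁²p²q² + 100c₁², the quantity cos φ₁ = (q/5)(2c₁p² + 5c₂) − (p/5)√Δ' satisfies −1 < cos φ₁ < 1. -/
set_option maxHeartbeats 1000000 in
/-- With `c₁ = (5 − β²)/(10(1 + β²))`, `c₂ = 4/5 − 2c₁`, `p, q ∈ [0,1]` and
`Δ' = (1 + 20c₁c₂)q² + 4c₁²p²q² + 100c₁²`, the smaller limiting root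
`cos φ₁ = (q/5)(2c₁p² + 5c₂) − (p/5)√Δ'` satisfies `−1 < cos φ₁ < 1`. -/
theorem hoc_cos_phi1_bounds
    (β : ℝ) (hβ : 0 < β)
    (c₁ c₂ : ℝ) (hc₁ : c₁ = (5 - β ^ 2) / (10 * (1 + β ^ 2))) (hc₂ : c₂ = 4 / 5 - 2 * c₁)
    (p q : ℝ) (hp0 : 0 ≤ p) (hp1 : p ≤ 1) (hq0 : 0 ≤ q) (hq1 : q ≤ 1)
    (Δ' : ℝ) (hΔ' : Δ' = (1 + 20 * c₁ * c₂) * q ^ 2 + 4 * c₁ ^ 2 * p ^ 2 * q ^ 2 + 100 * c₁ ^ 2)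
    (cosφ₁ : ℝ) (hcos : cosφ₁ = q / 5 * (2 * c₁ * p ^ 2 + 5 * c₂) - p / 5 * Real.sqrt Δ') :
    -1 < cosφ₁ ∧ cosφ₁ < 1 := by
  have hden : (0:ℝ) < 10 * (1 + β ^ 2) := by positivity
  have ht1 : c₁ < 1 / 2 := by
    rw [hc₁, div_lt_iff₀ hden]; nlinarith [sq_nonneg β]
  have ht2 : -1 / 10 < c₁ := by
    rw [hc₁, lt_div_iff₀ hden]; nlinarith [sq_nonneg β]
  have hΔ0 : 0 ≤ Δ' := by
    rw [hΔ', hc₂]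
    nlinarith [mul_nonneg (mul_nonneg (sq_nonneg q) (by linarith : (0:ℝ) ≤ 10 * c₁ + 1))
        (by linarith : (0:ℝ) ≤ 6 * c₁ + 1),
      mul_nonneg (mul_nonneg (sq_nonneg c₁) (by nlinarith : (0:ℝ) ≤ 1 - q ^ 2)) (by norm_num : (0:ℝ) ≤ 100),
      mul_nonneg (sq_nonneg (c₁ * p)) (sq_nonneg q)]
  have hs0 : 0 ≤ Real.sqrt Δ' := Real.sqrt_nonneg _
  have hp2 : p ^ 2 ≤ 1 := by nlinarith
  have hq2 : q ^ 2 ≤ 1 := by nlinarith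
  have hs2 : Real.sqrt Δ' ^ 2 = Δ' := Real.sq_sqrt hΔ0
  -- the two factors of (5 + q*A)^2 - p^2 * Δ'
  have hf1 : 0 < 5 + (4 - 10 * c₁) * q - p * (q - 10 * c₁) := by
    rcases le_total p q with h | h
    · nlinarith [mul_nonneg (by linarith : (0:ℝ) ≤ q - p) (by linarith : (0:ℝ) ≤ 1 - 2 * c₁),
        mul_nonneg hp0 (by linarith : (0:ℝ) ≤ 5 - q)]
    · nlinarith [mul_nonneg (by linarith : (0:ℝ) ≤ p - q) (by linarith : (0:ℝ) ≤ 1 + 10 * c₁),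
        mul_nonneg hq0 (by linarith : (0:ℝ) ≤ 1 - p)]
  have hf2 : 0 < 5 + (4 - 10 * c₁) * q + p * (q - 10 * c₁) := by
    have hpq0 : 0 ≤ p + q := by linarith
    rcases hpq0.lt_or_eq with h | h
    · nlinarith [mul_pos (by linarith : (0:ℝ) < 1 - 2 * c₁) h,
        mul_nonneg (by linarith : (0:ℝ) ≤ 5 - q) (by linarith : (0:ℝ) ≤ 1 - p),
        mul_nonneg hp0 hq0]
    · have hp : p = 0 := by linarith
      have hq : q = 0 := by linarith
      rw [hp, hq]; norm_num
  have hA : (0:ℝ) < 5 + q * (2 * c₁ * p ^ 2 + 5 * c₂) := by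
    rw [hc₂]
    nlinarith [mul_nonneg (mul_nonneg hq0 hp0) hp0,
      mul_nonneg hq0 (by linarith : (0:ℝ) ≤ 1 - p ^ 2)]
  constructor
  · -- lower bound: p * √Δ' < 5 + q * A
    have key : (p * Real.sqrt Δ') ^ 2 < (5 + q * (2 * c₁ * p ^ 2 + 5 * c₂)) ^ 2 := by
      have hps : (p * Real.sqrt Δ') ^ 2 = p ^ 2 * Δ' := by rw [mul_pow, hs2]
      rw [hps, hΔ', hc₂]
      nlinarith [mul_pos hf1 hf2]
    have hlt : p * Real.sqrt Δ' < 5 + q * (2 * c₁ * p ^ 2 + 5 * c₂) :=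
      lt_of_pow_lt_pow_left₀ 2 hA.le key
    rw [hcos]; linarith
  · -- upper bound
    have hA5 : q * (2 * c₁ * p ^ 2 + 5 * c₂) < 5 := by
      rw [hc₂]
      rcases le_or_gt c₁ 0 with h | h
      · nlinarith [mul_nonneg hq0 (by linarith : (0:ℝ) ≤ 1 - p ^ 2),
          mul_nonneg (by linarith : (0:ℝ) ≤ -c₁) (by nlinarith [mul_nonneg (sq_nonneg p) hq0] : (0:ℝ) ≤ 1 - p ^ 2 * q),
          mul_nonneg (mul_nonneg hq0 hp0) hp0]
      · nlinarith [mul_nonneg hq0 (mul_nonneg h.le (by linarith : (0:ℝ) ≤ 1 - p ^ 2)),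
          mul_nonneg h.le (by linarith : (0:ℝ) ≤ 1 - q)]
    rw [hcos]
    nlinarith [mul_nonneg hp0 hs0]
end

section
/- Let β > 0 be real, set c₁ = (5 − β²)/(10(1 + β²)) and c₂ = 4/5 − 2c₁, and let p, q ∈ [0,1]. With Δ' = (1 + 20c₁c₂)q² + 4c₁²p²q² + 100c₁², the quantity cos φ₂ = (q/5)(2c₁p² + 5c₂) + (p/5)√Δ' satisfies cos φ₂ ≤ 1, with equality if and only if p = 1 and q = 1. -/
set_option maxHeartbeats 2000000 in
/-- With `c₁ = (5 − β²)/(10(1 + β²))`, `c₂ = 4/5 − 2c₁`, `p, q ∈ [0,1]` and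
`Δ' = (1 + 20c₁c₂)q² + 4c₁²p²q² + 100c₁²`, the larger limiting root
`cos φ₂ = (q/5)(2c₁p² + 5c₂) + (p/5)√Δ'` satisfies `cos φ₂ ≤ 1`, with equality
iff `p = 1` and `q = 1`. -/
theorem hoc_cos_phi2_le_one
    (β : ℝ) (hβ : 0 < β)
    (c₁ c₂ : ℝ) (hc₁ : c₁ = (5 - β ^ 2) / (10 * (1 + β ^ 2))) (hc₂ : c₂ = 4 / 5 - 2 * c₁)
    (p q : ℝ) (hp0 : 0 ≤ p) (hp1 : p ≤ 1) (hq0 : 0 ≤ q) (hq1 : q ≤ 1)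
    (Δ' : ℝ) (hΔ' : Δ' = (1 + 20 * c₁ * c₂) * q ^ 2 + 4 * c₁ ^ 2 * p ^ 2 * q ^ 2 + 100 * c₁ ^ 2)
    (cosφ₂ : ℝ) (hcos : cosφ₂ = q / 5 * (2 * c₁ * p ^ 2 + 5 * c₂) + p / 5 * Real.sqrt Δ') :
    cosφ₂ ≤ 1 ∧ (cosφ₂ = 1 ↔ p = 1 ∧ q = 1) := by
  subst hc₂
  have hden : (0:ℝ) < 10 * (1 + β ^ 2) := by positivity
  have hc1ub : c₁ < 1/2 := by
    rw [hc₁, div_lt_iff₀ hden]; nlinarith [sq_nonneg β]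
  have hc1lb : -(1/10) < c₁ := by
    rw [hc₁, lt_div_iff₀ hden]; nlinarith [sq_nonneg β]
  clear hc₁ hβ hden
  have hΔ0 : 0 ≤ Δ' := by
    have e : Δ' = q^2 * ((1 + 10*c₁) * (1 + 6*c₁)) + (1 - q^2) * (10*c₁)^2
        + (2*c₁*p*q)^2 := by rw [hΔ']; ring
    have t1 : 0 ≤ q^2 * ((1 + 10*c₁) * (1 + 6*c₁)) :=
      mul_nonneg (sq_nonneg q) (mul_nonneg (by linarith) (by linarith))
    have t2 : 0 ≤ (1 - q^2) * (10*c₁)^2 :=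
      mul_nonneg (by nlinarith) (sq_nonneg _)
    nlinarith [sq_nonneg (2*c₁*p*q)]
  set s := Real.sqrt Δ' with hs
  have hsq : s ^ 2 = Δ' := Real.sq_sqrt hΔ0
  have hs0 : 0 ≤ s := Real.sqrt_nonneg _
  -- positivity of u+v
  have hupv : 0 < 5 - 4*q + 10*c₁*q + (p*q + 10*c₁*p) := by
    have e : 5 - 4*q + 10*c₁*q + (p*q + 10*c₁*p)
        = (1 - q) * (5 - p) + (1 + 10*c₁) * (p + q) := by ring
    rcases eq_or_lt_of_le hq1 with h | h
    · have : 0 < (1 + 10*c₁) * (p + q) :=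
        mul_pos (by linarith) (by linarith)
      have : 0 ≤ (1 - q) * (5 - p) := mul_nonneg (by linarith) (by linarith)
      linarith
    · have : 0 < (1 - q) * (5 - p) := mul_pos (by linarith) (by linarith)
      have : 0 ≤ (1 + 10*c₁) * (p + q) := mul_nonneg (by linarith) (by linarith)
      linarith
  -- nonnegativity of u-v
  have humv : 0 ≤ 5 - 4*q + 10*c₁*q - (p*q + 10*c₁*p) := by
    rcases le_total p q with h | h
    · have e : 5 - 4*q + 10*c₁*q - (p*q + 10*c₁*p)
          = (1 - q) * (5 + p) + (1 + 10*c₁) * (q - p) := by ring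
      have t1 : 0 ≤ (1 - q) * (5 + p) := mul_nonneg (by linarith) (by linarith)
      have t2 : 0 ≤ (1 + 10*c₁) * (q - p) := mul_nonneg (by linarith) (by linarith)
      linarith
    · have e : 5 - 4*q + 10*c₁*q - (p*q + 10*c₁*p)
          = (1 - p) * (5 + q) + (5 - 10*c₁) * (p - q) := by ring
      have t1 : 0 ≤ (1 - p) * (5 + q) := mul_nonneg (by linarith) (by linarith)
      have t2 : 0 ≤ (5 - 10*c₁) * (p - q) := mul_nonneg (by linarith) (by linarith)
      linarith
  -- 5 - q*A > 0
  have hA5 : 0 < 5 - q * (2*c₁*p^2 + 5*(4/5 - 2*c₁)) := by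
    have e : 5 - q * (2*c₁*p^2 + 5*(4/5 - 2*c₁))
        = 5 - 4*q + 2*(c₁ + 1/10) * (q * (5 - p^2)) - (1/5) * (q * (5 - p^2)) := by ring
    have hp2 : 0 ≤ 1 - p^2 := by nlinarith
    have h1 : 0 ≤ q * (5 - p^2) := mul_nonneg hq0 (by linarith)
    have h2 : q * (5 - p^2) ≤ 5 * q := by nlinarith
    rcases eq_or_lt_of_le hq0 with h | h
    · have : 0 ≤ 2*(c₁ + 1/10) * (q * (5 - p^2)) :=
        mul_nonneg (by linarith) (mul_nonneg hq0 (by nlinarith))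
      nlinarith
    · have : 0 < 2*(c₁ + 1/10) * (q * (5 - p^2)) := by
        apply mul_pos (by linarith) (mul_pos h (by nlinarith))
      nlinarith
  -- key identity
  have hid : (5 - q * (2*c₁*p^2 + 5*(4/5 - 2*c₁)))^2 - p^2 * Δ'
      = (5 - 4*q + 10*c₁*q - (p*q + 10*c₁*p)) * (5 - 4*q + 10*c₁*q + (p*q + 10*c₁*p)) := by
    rw [hΔ']; ring
  have hprod : 0 ≤ (5 - 4*q + 10*c₁*q - (p*q + 10*c₁*p)) * (5 - 4*q + 10*c₁*q + (p*q + 10*c₁*p)) :=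
    mul_nonneg humv hupv.le
  have hps2 : (p*s)^2 ≤ (5 - q * (2*c₁*p^2 + 5*(4/5 - 2*c₁)))^2 := by
    have h1 : (p*s)^2 = p^2 * Δ' := by rw [mul_pow, hsq]
    linarith
  have hps : p * s ≤ 5 - q * (2*c₁*p^2 + 5*(4/5 - 2*c₁)) := by
    have hx : 0 ≤ p * s := mul_nonneg hp0 hs0
    nlinarith
  have hcos' : cosφ₂ = (q * (2*c₁*p^2 + 5*(4/5 - 2*c₁)) + p * s) / 5 := by
    rw [hcos]; ring
  have hle : cosφ₂ ≤ 1 := by rw [hcos']; linarith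
  refine ⟨hle, ?_, ?_⟩
  · -- forward
    intro h1
    have heq : p * s = 5 - q * (2*c₁*p^2 + 5*(4/5 - 2*c₁)) := by
      rw [hcos'] at h1; linarith
    have hF0 : (5 - 4*q + 10*c₁*q - (p*q + 10*c₁*p)) * (5 - 4*q + 10*c₁*q + (p*q + 10*c₁*p)) = 0 := by
      have h2 : p^2 * Δ' = (5 - q * (2*c₁*p^2 + 5*(4/5 - 2*c₁)))^2 := by
        rw [← heq, mul_pow, hsq]
      linarith
    have humv0 : 5 - 4*q + 10*c₁*q - (p*q + 10*c₁*p) = 0 := by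
      rcases mul_eq_zero.mp hF0 with h | h
      · exact h
      · linarith
    rcases le_total p q with h | h
    · have e : (1 - q) * (5 + p) + (1 + 10*c₁) * (q - p) = 0 := by linear_combination humv0
      have t1 : 0 ≤ (1 - q) * (5 + p) := mul_nonneg (by linarith) (by linarith)
      have t2 : 0 ≤ (1 + 10*c₁) * (q - p) := mul_nonneg (by linarith) (by linarith)
      have e1 : (1 - q) * (5 + p) = 0 := by linarith
      have e2 : (1 + 10*c₁) * (q - p) = 0 := by linarith
      have hq1' : q = 1 := by
        rcases mul_eq_zero.mp e1 with h' | h' <;> linarith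
      have hpq : q - p = 0 := by
        rcases mul_eq_zero.mp e2 with h' | h' <;> linarith
      exact ⟨by linarith, hq1'⟩
    · have e : (1 - p) * (5 + q) + (5 - 10*c₁) * (p - q) = 0 := by linear_combination humv0
      have t1 : 0 ≤ (1 - p) * (5 + q) := mul_nonneg (by linarith) (by linarith)
      have t2 : 0 ≤ (5 - 10*c₁) * (p - q) := mul_nonneg (by linarith) (by linarith)
      have e1 : (1 - p) * (5 + q) = 0 := by linarith
      have e2 : (5 - 10*c₁) * (p - q) = 0 := by linarith
      have hp1' : p = 1 := by
        rcases mul_eq_zero.mp e1 with h' | h' <;> linarith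
      have hpq : p - q = 0 := by
        rcases mul_eq_zero.mp e2 with h' | h' <;> linarith
      exact ⟨hp1', by linarith⟩
  · -- backward
    rintro ⟨rfl, rfl⟩
    have hΔeq : Δ' = (1 + 8*c₁)^2 := by rw [hΔ']; ring
    have hseq : s = 1 + 8*c₁ := by
      rw [hs, hΔeq, Real.sqrt_sq (by linarith)]
    rw [hcos, hseq]; ring
end

section
/- Let c₁ ≥ 0 and δ > 0 be real numbers, and set k₁ = δ(1 + 10c₁)/√((1 + 14c₁)(1 + 6c₁)). Then k₁ ≥ δ, and k₁ satisfies the balance equation (1/2 − c₁/(1 + 8c₁)) · k₁ = ((1 + 10c₁)/(2(1 + 8c₁))) · (k₁ − √(k₁² − δ²)). -/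
/-- For `c₁ ≥ 0` and `δ > 0`, the optimal first-order coefficient
`k₁ = δ(1 + 10c₁)/√((1 + 14c₁)(1 + 6c₁))` satisfies `k₁ ≥ δ` and the balance
equation `(1/2 − c₁/(1 + 8c₁))k₁ = ((1 + 10c₁)/(2(1 + 8c₁)))(k₁ − √(k₁² − δ²))`. -/
theorem hoc_optimal_k1
    (c₁ δ : ℝ) (hc₁ : 0 ≤ c₁) (hδ : 0 < δ)
    (k₁ : ℝ) (hk₁ : k₁ = δ * (1 + 10 * c₁) / Real.sqrt ((1 + 14 * c₁) * (1 + 6 * c₁))) :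
    δ ≤ k₁ ∧
    (1 / 2 - c₁ / (1 + 8 * c₁)) * k₁
      = (1 + 10 * c₁) / (2 * (1 + 8 * c₁)) * (k₁ - Real.sqrt (k₁ ^ 2 - δ ^ 2)) := by
  have hP : (0:ℝ) < (1 + 14 * c₁) * (1 + 6 * c₁) := by positivity
  set s := Real.sqrt ((1 + 14 * c₁) * (1 + 6 * c₁)) with hs_def
  have hs : 0 < s := Real.sqrt_pos.mpr hP
  have hs2 : s ^ 2 = (1 + 14 * c₁) * (1 + 6 * c₁) := Real.sq_sqrt hP.le
  have hsle : s ≤ 1 + 10 * c₁ := by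
    have := Real.sqrt_le_sqrt (show (1 + 14 * c₁) * (1 + 6 * c₁) ≤ (1 + 10 * c₁)^2 by nlinarith)
    simpa [Real.sqrt_sq (by positivity : (0:ℝ) ≤ 1 + 10 * c₁)] using this
  have hsqrt : Real.sqrt (k₁ ^ 2 - δ ^ 2) = 4 * c₁ * δ / s := by
    have h : k₁ ^ 2 - δ ^ 2 = (4 * c₁ * δ / s) ^ 2 := by
      rw [hk₁]; field_simp; nlinarith [hs2]
    rw [h, Real.sqrt_sq (by positivity)]
  constructor
  · rw [hk₁]
    rw [le_div_iff₀ hs]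
    nlinarith
  · rw [hsqrt, hk₁]
    have h8 : (1:ℝ) + 8 * c₁ ≠ 0 := by positivity
    field_simp
    ring
end

section
/- Let Δx, m, n be real numbers with Δx > 0, n ≤ 0 and m + 1 > 0. Define sh(k) = sinh(kΔx)/Δx and f(k) = (m − n·sh(k)²)·tanh(k) + sh(k). Then f(k) > 0 for every k > 0; in particular f has no positive root. -/
lemma sinh_lt_mul_cosh {x : ℝ} (hx : 0 < x) : Real.sinh x < x * Real.cosh x := by
  have hg : ∀ t : ℝ, HasDerivAt (fun t : ℝ => t * Real.cosh t - Real.sinh t)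
      (t * Real.sinh t) t := by
    intro t
    have h := ((hasDerivAt_id t).mul (Real.hasDerivAt_cosh t)).sub (Real.hasDerivAt_sinh t)
    exact h.congr_deriv (by simp)
  have hmono : StrictMonoOn (fun t : ℝ => t * Real.cosh t - Real.sinh t) (Set.Ici 0) := by
    apply strictMonoOn_of_deriv_pos (convex_Ici 0)
    · exact (Continuous.sub (continuous_id.mul Real.continuous_cosh) Real.continuous_sinh).continuousOn
    · intro t ht
      rw [interior_Ici] at ht
      rw [(hg t).deriv]
      exact mul_pos ht (Real.sinh_pos_iff.2 ht)
  have h0 := hmono (Set.self_mem_Ici) (Set.mem_Ici.2 hx.le) hx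
  simp at h0
  linarith

/-- Robin boundary conditions, Case I (`n ≤ 0`, `m + 1 > 0`): the hyperbolic
characteristic function `f(k) = (m − n·sh(k)²)·tanh(k) + sh(k)`, with
`sh(k) = sinh(kΔx)/Δx`, is positive for all `k > 0`; in particular it has no
positive root. -/
theorem robin_case_I_no_positive_root
    (Δx m n : ℝ) (hΔx : 0 < Δx) (hn : n ≤ 0) (hm : 0 < m + 1)
    (sh : ℝ → ℝ) (hsh : ∀ k, sh k = Real.sinh (k * Δx) / Δx)
    (f : ℝ → ℝ) (hf : ∀ k, f k = (m - n * sh k ^ 2) * Real.tanh k + sh k) :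
    ∀ k : ℝ, 0 < k → 0 < f k := by
  intro k hk
  have hcosh : 0 < Real.cosh k := Real.cosh_pos k
  have ht : 0 < Real.tanh k := by
    rw [Real.tanh_eq_sinh_div_cosh]
    exact div_pos (Real.sinh_pos_iff.2 hk) hcosh
  have htk : Real.tanh k < k := by
    rw [Real.tanh_eq_sinh_div_cosh, div_lt_iff₀ hcosh]
    exact sinh_lt_mul_cosh hk
  have hks : k < sh k := by
    rw [hsh, lt_div_iff₀ hΔx]
    exact Real.self_lt_sinh_iff.2 (by positivity)
  have hst : Real.tanh k < sh k := htk.trans hks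
  have hns : n * sh k ^ 2 ≤ 0 := mul_nonpos_of_nonpos_of_nonneg hn (sq_nonneg _)
  rw [hf]
  nlinarith [mul_nonneg (neg_nonneg.2 hns) ht.le, mul_pos hm ht]
end

section
/- Let Δx, m, n be real numbers with 0 < Δx ≤ 1, n ≤ 0 and m + 1 < 0. Define sh(k) = sinh(kΔx)/Δx and f(k) = (m − n·sh(k)²)·tanh(k) + sh(k). Then there exists exactly one k > 0 with f(k) = 0. -/
open Real Set

private lemma aux_sinh_mul_le {a : ℝ} (ha0 : 0 ≤ a) (ha1 : a ≤ 1) {x : ℝ} (hx : 0 ≤ x) :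
    Real.sinh (x * a) ≤ a * Real.sinh x := by
  set F : ℝ → ℝ := fun t => a * Real.sinh t - Real.sinh (t * a) with hFdef
  have hF : ∀ t : ℝ, HasDerivAt F (a * Real.cosh t - Real.cosh (t * a) * (1 * a)) t := by
    intro t
    exact ((Real.hasDerivAt_sinh t).const_mul a).sub (((hasDerivAt_id t).mul_const a).sinh)
  have hmono : MonotoneOn F (Ici 0) := by
    apply monotoneOn_of_deriv_nonneg (convex_Ici 0)
    · exact fun t _ => ((hF t).continuousAt).continuousWithinAt
    · exact fun t _ => ((hF t).differentiableAt).differentiableWithinAt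
    · intro t ht
      rw [interior_Ici, mem_Ioi] at ht
      rw [(hF t).deriv]
      have h1 : Real.cosh (t * a) ≤ Real.cosh t := by
        rw [Real.cosh_le_cosh]
        rw [abs_of_nonneg (by positivity), abs_of_nonneg ht.le]
        nlinarith
      nlinarith
  have h0 : F 0 ≤ F x := hmono (by simp) (by simpa using hx) hx
  simp [hFdef] at h0
  linarith

set_option maxHeartbeats 1000000 in
/-- Robin boundary conditions, Case II (`n ≤ 0`, `m + 1 < 0`, `0 < Δx ≤ 1`): the
hyperbolic characteristic function `f(k) = (m − n·sh(k)²)·tanh(k) + sh(k)`, with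
`sh(k) = sinh(kΔx)/Δx`, has exactly one positive root. -/
theorem robin_case_II_unique_positive_root
    (Δx m n : ℝ) (hΔx0 : 0 < Δx) (hΔx1 : Δx ≤ 1) (hn : n ≤ 0) (hm : m + 1 < 0)
    (sh : ℝ → ℝ) (hsh : ∀ k, sh k = Real.sinh (k * Δx) / Δx)
    (f : ℝ → ℝ) (hf : ∀ k, f k = (m - n * sh k ^ 2) * Real.tanh k + sh k) :
    ∃! k : ℝ, 0 < k ∧ f k = 0 := by
  have hΔ : Δx ≠ 0 := ne_of_gt hΔx0
  set g : ℝ → ℝ := fun k =>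
    m - n * (Real.sinh (k * Δx) / Δx) ^ 2
      + (Real.sinh (k * Δx) / Δx) * (Real.cosh k / Real.sinh k) with hgdef
  -- f k = g k * tanh k for k > 0
  have hfg : ∀ k : ℝ, 0 < k → f k = g k * Real.tanh k := by
    intro k hk
    have hS : (0:ℝ) < Real.sinh k := Real.sinh_pos_iff.2 hk
    have hC : (0:ℝ) < Real.cosh k := Real.cosh_pos _
    rw [hf, hsh, hgdef, Real.tanh_eq_sinh_div_cosh]
    field_simp
  have htanh_pos : ∀ k : ℝ, 0 < k → 0 < Real.tanh k := by
    intro k hk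
    rw [Real.tanh_eq_sinh_div_cosh]
    exact div_pos (Real.sinh_pos_iff.2 hk) (Real.cosh_pos _)
  have hiff : ∀ k : ℝ, 0 < k → (f k = 0 ↔ g k = 0) := by
    intro k hk
    rw [hfg k hk]
    constructor
    · intro h
      rcases mul_eq_zero.1 h with h | h
      · exact h
      · exact absurd h (ne_of_gt (htanh_pos k hk))
    · intro h; rw [h, zero_mul]
  -- derivative of g is positive on Ioi 0
  have hderiv : ∀ k : ℝ, 0 < k → ∃ D : ℝ, HasDerivAt g D k ∧ 0 < D := by
    intro k hk
    have hS : (0:ℝ) < Real.sinh k := Real.sinh_pos_iff.2 hk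
    have hC : (1:ℝ) < Real.cosh k := Real.one_lt_cosh.2 (ne_of_gt hk)
    have hsa : (0:ℝ) < Real.sinh (k * Δx) := Real.sinh_pos_iff.2 (by positivity)
    have hca : (1:ℝ) ≤ Real.cosh (k * Δx) := Real.one_le_cosh _
    have h1 : HasDerivAt (fun k : ℝ => Real.sinh (k * Δx)) (Real.cosh (k * Δx) * (1 * Δx)) k :=
      ((hasDerivAt_id k).mul_const Δx).sinh
    have h2 : HasDerivAt (fun k : ℝ => Real.sinh (k * Δx) / Δx)
        (Real.cosh (k * Δx) * (1 * Δx) / Δx) k := h1.div_const Δx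
    have h3 : HasDerivAt (fun k : ℝ => (Real.sinh (k * Δx) / Δx) ^ 2)
        ((2 : ℕ) * (Real.sinh (k * Δx) / Δx) ^ 1 * (Real.cosh (k * Δx) * (1 * Δx) / Δx)) k :=
      h2.pow 2
    have hq : HasDerivAt (fun k : ℝ => Real.cosh k / Real.sinh k)
        ((Real.sinh k * Real.sinh k - Real.cosh k * Real.cosh k) / Real.sinh k ^ 2) k :=
      (Real.hasDerivAt_cosh k).div (Real.hasDerivAt_sinh k) (ne_of_gt hS)
    have hg : HasDerivAt g
        (0 - n * ((2 : ℕ) * (Real.sinh (k * Δx) / Δx) ^ 1 * (Real.cosh (k * Δx) * (1 * Δx) / Δx))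
          + ((Real.cosh (k * Δx) * (1 * Δx) / Δx) * (Real.cosh k / Real.sinh k)
            + (Real.sinh (k * Δx) / Δx)
              * ((Real.sinh k * Real.sinh k - Real.cosh k * Real.cosh k) / Real.sinh k ^ 2))) k := by
      exact ((hasDerivAt_const k m).sub (h3.const_mul n)).add (h2.mul hq)
    refine ⟨_, hg, ?_⟩
    -- positivity of the derivative
    have hkey : Real.sinh (k * Δx) < Δx * (Real.cosh (k * Δx) * Real.cosh k * Real.sinh k) := by
      have h4 : Real.sinh (k * Δx) ≤ Δx * Real.sinh k :=
        aux_sinh_mul_le hΔx0.le hΔx1 hk.le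
      have h5 : Δx * Real.sinh k < Δx * (Real.cosh (k * Δx) * Real.cosh k * Real.sinh k) := by
        apply mul_lt_mul_of_pos_left _ hΔx0
        have h6 : Real.sinh k * 1 < Real.sinh k * (Real.cosh (k * Δx) * Real.cosh k) := by
          apply mul_lt_mul_of_pos_left _ hS
          nlinarith
        nlinarith
      linarith
    have hid : Real.cosh k * Real.cosh k - Real.sinh k * Real.sinh k = 1 := by
      have := Real.cosh_sq_sub_sinh_sq k
      nlinarith
    have heq : 0 - n * ((2 : ℕ) * (Real.sinh (k * Δx) / Δx) ^ 1 * (Real.cosh (k * Δx) * (1 * Δx) / Δx))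
          + ((Real.cosh (k * Δx) * (1 * Δx) / Δx) * (Real.cosh k / Real.sinh k)
            + (Real.sinh (k * Δx) / Δx)
              * ((Real.sinh k * Real.sinh k - Real.cosh k * Real.cosh k) / Real.sinh k ^ 2))
        = (-n) * (2 * (Real.sinh (k * Δx) / Δx) * Real.cosh (k * Δx))
          + (Real.cosh (k * Δx) * Real.cosh k * Real.sinh k * Δx
              + Real.sinh (k * Δx) * (Real.sinh k * Real.sinh k - Real.cosh k * Real.cosh k))
            / (Δx * Real.sinh k ^ 2) := by
      field_simp
      ring
    rw [heq]
    have ht1 : 0 ≤ (-n) * (2 * (Real.sinh (k * Δx) / Δx) * Real.cosh (k * Δx)) := by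
      apply mul_nonneg (by linarith)
      positivity
    have ht2 : 0 < (Real.cosh (k * Δx) * Real.cosh k * Real.sinh k * Δx
              + Real.sinh (k * Δx) * (Real.sinh k * Real.sinh k - Real.cosh k * Real.cosh k))
            / (Δx * Real.sinh k ^ 2) := by
      apply div_pos _ (by positivity)
      nlinarith
    linarith
  -- g is strictly monotone on Ioi 0
  have hgcont : ContinuousOn g (Ioi 0) := by
    intro k hk
    obtain ⟨D, hD, _⟩ := hderiv k hk
    exact hD.continuousAt.continuousWithinAt
  have hmono : StrictMonoOn g (Ioi 0) := by
    apply strictMonoOn_of_deriv_pos (convex_Ioi 0) hgcont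
    intro k hk
    rw [interior_Ioi] at hk
    obtain ⟨D, hD, hDpos⟩ := hderiv k hk
    rw [hD.deriv]
    exact hDpos
  -- small point where g < 0
  have hφ : Continuous (fun k : ℝ => m - n * Real.sinh k ^ 2 + Real.cosh k) := by
    continuity
  have hφ0 : ∀ᶠ k in nhdsWithin (0:ℝ) (Ioi 0),
      m - n * Real.sinh k ^ 2 + Real.cosh k < 0 := by
    have h0 : Filter.Tendsto (fun k : ℝ => m - n * Real.sinh k ^ 2 + Real.cosh k)
        (nhds 0) (nhds (m - n * Real.sinh 0 ^ 2 + Real.cosh 0)) := hφ.continuousAt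
    have h1 : m - n * Real.sinh 0 ^ 2 + Real.cosh 0 < 0 := by
      simp [Real.sinh_zero, Real.cosh_zero]; linarith
    exact (h0.eventually_lt_const h1).filter_mono nhdsWithin_le_nhds
  obtain ⟨k0, hk0φ, hk0pos⟩ := (hφ0.and eventually_mem_nhdsWithin).exists
  rw [mem_Ioi] at hk0pos
  have hgk0 : g k0 < 0 := by
    have hS : (0:ℝ) < Real.sinh k0 := Real.sinh_pos_iff.2 hk0pos
    have hC : (0:ℝ) < Real.cosh k0 := Real.cosh_pos _
    have hsa : (0:ℝ) < Real.sinh (k0 * Δx) := Real.sinh_pos_iff.2 (by positivity)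
    have h4 : Real.sinh (k0 * Δx) / Δx ≤ Real.sinh k0 := by
      rw [div_le_iff₀ hΔx0]
      have := aux_sinh_mul_le hΔx0.le hΔx1 hk0pos.le
      linarith [this]
    have h5 : (Real.sinh (k0 * Δx) / Δx) * (Real.cosh k0 / Real.sinh k0)
        ≤ Real.sinh k0 * (Real.cosh k0 / Real.sinh k0) :=
      mul_le_mul_of_nonneg_right h4 (by positivity)
    have h6 : Real.sinh k0 * (Real.cosh k0 / Real.sinh k0) = Real.cosh k0 := by
      rw [mul_comm, div_mul_cancel₀ _ (ne_of_gt hS)]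
    have h7 : -n * (Real.sinh (k0 * Δx) / Δx) ^ 2 ≤ -n * Real.sinh k0 ^ 2 :=
      mul_le_mul_of_nonneg_left (pow_le_pow_left₀ (by positivity) h4 2) (by linarith)
    have hg0 : g k0 = m - n * (Real.sinh (k0 * Δx) / Δx) ^ 2
        + (Real.sinh (k0 * Δx) / Δx) * (Real.cosh k0 / Real.sinh k0) := rfl
    rw [hg0]
    linarith
  -- large point where g > 0
  set k1 : ℝ := max (k0 + 1) (1 - m) with hk1def
  have hk1gt : k0 < k1 := lt_of_lt_of_le (by linarith) (le_max_left _ _)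
  have hk1pos : 0 < k1 := lt_trans hk0pos hk1gt
  have hgk1 : 0 < g k1 := by
    have hS : (0:ℝ) < Real.sinh k1 := Real.sinh_pos_iff.2 hk1pos
    have hC : (0:ℝ) < Real.cosh k1 := Real.cosh_pos _
    have hSC : Real.sinh k1 < Real.cosh k1 := by
      have := Real.cosh_sub_sinh k1
      have := Real.exp_pos (-k1)
      linarith
    have hsa : k1 * Δx ≤ Real.sinh (k1 * Δx) := Real.self_le_sinh_iff.2 (by positivity)
    have h4 : k1 ≤ Real.sinh (k1 * Δx) / Δx := by
      rw [le_div_iff₀ hΔx0]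
      linarith
    have h5 : (1:ℝ) ≤ Real.cosh k1 / Real.sinh k1 := by
      rw [le_div_iff₀ hS]; linarith
    have h6 : k1 ≤ (Real.sinh (k1 * Δx) / Δx) * (Real.cosh k1 / Real.sinh k1) := by
      calc k1 = k1 * 1 := (mul_one k1).symm
      _ ≤ (Real.sinh (k1 * Δx) / Δx) * (Real.cosh k1 / Real.sinh k1) :=
          mul_le_mul h4 h5 zero_le_one (by positivity)
    have h7 : 0 ≤ -n * (Real.sinh (k1 * Δx) / Δx) ^ 2 := by
      apply mul_nonneg (by linarith); positivity
    have h8 : 1 - m ≤ k1 := le_max_right _ _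
    have hg1 : g k1 = m - n * (Real.sinh (k1 * Δx) / Δx) ^ 2
        + (Real.sinh (k1 * Δx) / Δx) * (Real.cosh k1 / Real.sinh k1) := rfl
    rw [hg1]
    linarith
  -- IVT
  have hsub : Icc k0 k1 ⊆ Ioi 0 := fun x hx => lt_of_lt_of_le hk0pos hx.1
  have hivt := intermediate_value_Icc hk1gt.le (hgcont.mono hsub)
  have h0mem : (0:ℝ) ∈ Icc (g k0) (g k1) := ⟨hgk0.le, hgk1.le⟩
  obtain ⟨c, hcmem, hgc⟩ := hivt h0mem
  have hcpos : 0 < c := lt_of_lt_of_le hk0pos hcmem.1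
  refine ⟨c, ⟨hcpos, (hiff c hcpos).2 hgc⟩, ?_⟩
  rintro y ⟨hypos, hfy⟩
  have hgy : g y = 0 := (hiff y hypos).1 hfy
  exact hmono.injOn (mem_Ioi.2 hypos) (mem_Ioi.2 hcpos) (by rw [hgy, hgc])
end

section
/- Let Δx, m, n be real numbers with 0 < Δx ≤ 1, n > 0 and m + 1 > 0. Define sh(k) = sinh(kΔx)/Δx and f(k) = (m − n·sh(k)²)·tanh(k) + sh(k). Then there exists exactly one k > 0 with f(k) = 0. -/
open Real Set

lemma aux_sinh_le (x : ℝ) (hx : 0 ≤ x) : Real.sinh x ≤ x * Real.cosh x := by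
  have h : MonotoneOn (fun x => x * Real.cosh x - Real.sinh x) (Ici 0) := by
    apply monotoneOn_of_deriv_nonneg (convex_Ici 0)
    · fun_prop
    · apply Differentiable.differentiableOn; fun_prop
    · intro t ht
      rw [interior_Ici, mem_Ioi] at ht
      have hd : HasDerivAt (fun x => x * Real.cosh x - Real.sinh x) (t * Real.sinh t) t := by
        have h1 := ((hasDerivAt_id t).mul (Real.hasDerivAt_cosh t)).sub (Real.hasDerivAt_sinh t)
        refine h1.congr_deriv (Eq.symm ?_)
        simp only [id_eq]; ring
      rw [hd.deriv]
      have := Real.sinh_nonneg_iff.mpr ht.le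
      positivity
  have := h (self_mem_Ici) hx hx
  simpa using this

lemma aux_cosh_ge (x : ℝ) (hx : 0 ≤ x) : 1 + x^2/2 ≤ Real.cosh x := by
  have h : MonotoneOn (fun t => Real.cosh t - 1 - t^2/2) (Ici 0) := by
    apply monotoneOn_of_deriv_nonneg (convex_Ici 0)
    · fun_prop
    · apply Differentiable.differentiableOn; fun_prop
    · intro t ht
      rw [interior_Ici, mem_Ioi] at ht
      have hd : HasDerivAt (fun t : ℝ => Real.cosh t - 1 - t^2/2) (Real.sinh t - t) t := by
        have h1 := ((Real.hasDerivAt_cosh t).sub_const 1).sub ((hasDerivAt_pow 2 t).div_const 2)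
        refine h1.congr_deriv (Eq.symm ?_)
        push_cast; ring
      rw [hd.deriv]
      have := Real.self_le_sinh_iff.mpr ht.le
      linarith
  have := h self_mem_Ici hx hx
  simp only [Real.cosh_zero] at this
  nlinarith [this]

lemma aux_sinh_ge (x : ℝ) (hx : 0 ≤ x) : x + x^3/6 ≤ Real.sinh x := by
  have h : MonotoneOn (fun x => Real.sinh x - x - x^3/6) (Ici 0) := by
    apply monotoneOn_of_deriv_nonneg (convex_Ici 0)
    · fun_prop
    · apply Differentiable.differentiableOn; fun_prop
    · intro t ht
      rw [interior_Ici, mem_Ioi] at ht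
      have hd : HasDerivAt (fun x : ℝ => Real.sinh x - x - x^3/6) (Real.cosh t - 1 - t^2/2) t := by
        have h1 := ((Real.hasDerivAt_sinh t).sub (hasDerivAt_id t)).sub
          ((hasDerivAt_pow 3 t).div_const 6)
        refine h1.congr_deriv (Eq.symm ?_)
        all_goals (try simp only [id_eq]); push_cast; ring
      rw [hd.deriv]
      have := aux_cosh_ge t ht.le
      linarith
  have := h self_mem_Ici hx hx
  simp only [Real.sinh_zero] at this
  nlinarith [this]

lemma aux_tanh_ge (x : ℝ) (hx : 0 ≤ x) : (x - x^3/3) * Real.cosh x ≤ Real.sinh x := by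
  have h : MonotoneOn (fun x => Real.sinh x - (x - x^3/3) * Real.cosh x) (Ici 0) := by
    apply monotoneOn_of_deriv_nonneg (convex_Ici 0)
    · fun_prop
    · apply Differentiable.differentiableOn; fun_prop
    · intro t ht
      rw [interior_Ici, mem_Ioi] at ht
      have hd : HasDerivAt (fun x => Real.sinh x - (x - x^3/3) * Real.cosh x)
          (Real.cosh t - ((1 - 3*t^2/3) * Real.cosh t + (t - t^3/3) * Real.sinh t)) t := by
        have h2 : HasDerivAt (fun x : ℝ => x - x^3/3) (1 - 3*t^2/3) t := by
          have := (hasDerivAt_id t).sub ((hasDerivAt_pow 3 t).div_const 3)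
          refine this.congr_deriv (Eq.symm ?_)
          all_goals ((try simp only [id_eq]); push_cast; ring)
        exact (Real.hasDerivAt_sinh t).sub (h2.mul (Real.hasDerivAt_cosh t))
      rw [hd.deriv]
      have h3 : Real.sinh t ≤ t * Real.cosh t := aux_sinh_le t ht.le
      have h4 : 0 ≤ Real.sinh t := Real.sinh_nonneg_iff.mpr ht.le
      have hc : (0:ℝ) < Real.cosh t := Real.cosh_pos t
      have key : (t - t^3/3) * Real.sinh t ≤ t^2 * Real.cosh t := by
        rcases le_or_gt (t - t^3/3) 0 with h | h
        · nlinarith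
        · calc (t - t^3/3) * Real.sinh t ≤ (t - t^3/3) * (t * Real.cosh t) :=
                mul_le_mul_of_nonneg_left h3 h.le
            _ ≤ t^2 * Real.cosh t := by
                nlinarith [mul_nonneg (mul_nonneg (mul_nonneg ht.le ht.le)
                  (mul_nonneg ht.le ht.le)) hc.le]
      linarith
  have := h self_mem_Ici hx hx
  simp only [Real.sinh_zero, Real.cosh_zero] at this
  nlinarith [this]

lemma aux_ineqA (k : ℝ) (hk : 0 ≤ k) :
    2*k^2*Real.cosh k ≤ Real.sinh k^2 * Real.cosh k + k * Real.sinh k := by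
  have h1 := aux_sinh_ge k hk
  have h2 := aux_tanh_ge k hk
  have h3 : (0:ℝ) < Real.cosh k := Real.cosh_pos k
  have h4 : 0 ≤ Real.sinh k := Real.sinh_nonneg_iff.mpr hk
  have ha : (k + k^3/6)^2 ≤ Real.sinh k^2 := by nlinarith [pow_nonneg hk 3]
  have hb : k*((k - k^3/3) * Real.cosh k) ≤ k * Real.sinh k := mul_le_mul_of_nonneg_left h2 hk
  nlinarith [mul_le_mul_of_nonneg_right ha h3.le, sq_nonneg (k^3/6),
    mul_nonneg (mul_nonneg hk hk) (mul_nonneg hk h3.le)]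

noncomputable def Qf (b c : ℝ) : ℝ → ℝ :=
  fun k => b^2*(k/Real.sinh k)^2 + b*(k/Real.sinh k)*(c*Real.cosh k) - 2*c

lemma aux_Qderiv (b c k : ℝ) (hk : 0 < k) :
    HasDerivAt (Qf b c)
      (b^2*(2*(k/Real.sinh k)*((1*Real.sinh k - k*Real.cosh k)/Real.sinh k^2))
        + (b*((1*Real.sinh k - k*Real.cosh k)/Real.sinh k^2)*(c*Real.cosh k)
           + b*(k/Real.sinh k)*(c*Real.sinh k))) k := by
  have hS : Real.sinh k ≠ 0 := by positivity
  have hu : HasDerivAt (fun k => k/Real.sinh k)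
      ((1*Real.sinh k - k*Real.cosh k)/Real.sinh k^2) k :=
    (hasDerivAt_id k).div (Real.hasDerivAt_sinh k) hS
  have h1 : HasDerivAt (fun k => b^2*(k/Real.sinh k)^2)
      (b^2*(2*(k/Real.sinh k)*((1*Real.sinh k - k*Real.cosh k)/Real.sinh k^2))) k := by
    have := (hu.pow 2).const_mul (b^2)
    refine this.congr_deriv (Eq.symm ?_)
    push_cast; ring
  have h2 : HasDerivAt (fun k => b*(k/Real.sinh k)*(c*Real.cosh k))
      (b*((1*Real.sinh k - k*Real.cosh k)/Real.sinh k^2)*(c*Real.cosh k)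
        + b*(k/Real.sinh k)*(c*Real.sinh k)) k := by
    exact (hu.const_mul b).mul ((Real.hasDerivAt_cosh k).const_mul c)
  exact (h1.add h2).sub_const (2*c)

lemma aux_Qderiv_nonneg (b c k : ℝ) (hb : 0 < b) (hbc : b ≤ c) (hk : 0 < k) :
    0 ≤ (b^2*(2*(k/Real.sinh k)*((1*Real.sinh k - k*Real.cosh k)/Real.sinh k^2))
        + (b*((1*Real.sinh k - k*Real.cosh k)/Real.sinh k^2)*(c*Real.cosh k)
           + b*(k/Real.sinh k)*(c*Real.sinh k))) := by
  set S := Real.sinh k with hSdef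
  set C := Real.cosh k with hCdef
  have hS : 0 < S := Real.sinh_pos_iff.mpr hk
  have hC : 0 < C := Real.cosh_pos k
  have hSkC : S ≤ k*C := by have := aux_sinh_le k hk.le; linarith
  have hA : 2*k^2*C ≤ S^2*C + k*S := aux_ineqA k hk.le
  have hid : C^2 = S^2 + 1 := Real.cosh_sq k
  have hN : 0 ≤ 2*b^2*k*(S - k*C) + b*c*C*S*(S - k*C) + b*c*k*S^3 := by
    have h1 : b*(k*(S - k*C)) ≥ c*(k*(S - k*C)) := by
      apply mul_le_mul_of_nonpos_right hbc
      exact mul_nonpos_of_nonneg_of_nonpos hk.le (by linarith)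
    have h2 : b*(b*(k*(S - k*C))) ≥ b*(c*(k*(S - k*C))) := by
      exact mul_le_mul_of_nonneg_left h1 hb.le
    have e : k*S*C^2 = k*S*(S^2+1) := by rw [hid]
    have h3 : 0 ≤ 2*(k*(S - k*C)) + C*S*(S - k*C) + k*S^3 := by nlinarith [e]
    nlinarith [mul_pos hb (lt_of_lt_of_le hb hbc)]
  have expand : (b^2*(2*(k/S)*((1*S - k*C)/S^2)) + (b*((1*S - k*C)/S^2)*(c*C) + b*(k/S)*(c*S)))
      = (2*b^2*k*(S - k*C) + b*c*C*S*(S - k*C) + b*c*k*S^3)/S^3 := by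
    field_simp
    ring
  rw [expand]
  positivity

lemma aux_Qmono (b c x : ℝ) (hb : 0 < b) (hbc : b ≤ c) (hx : 0 < x) :
    MonotoneOn (Qf b c) (Ici x) := by
  apply monotoneOn_of_deriv_nonneg (convex_Ici x)
  · intro k hk
    exact (aux_Qderiv b c k (lt_of_lt_of_le hx hk)).continuousAt.continuousWithinAt
  · intro k hk
    rw [interior_Ici, mem_Ioi] at hk
    exact (aux_Qderiv b c k (hx.trans hk)).differentiableAt.differentiableWithinAt
  · intro k hk
    rw [interior_Ici, mem_Ioi] at hk
    have hk0 : 0 < k := hx.trans hk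
    rw [(aux_Qderiv b c k hk0).deriv]
    exact aux_Qderiv_nonneg b c k hb hbc hk0

lemma aux_key (x k : ℝ) (hx : 0 < x) (hxk : x ≤ k) :
    0 ≤ Qf (Real.sinh x / x) (Real.cosh x) k := by
  have hsx : 0 < Real.sinh x := Real.sinh_pos_iff.mpr hx
  have hb : 0 < Real.sinh x / x := by positivity
  have hbc : Real.sinh x / x ≤ Real.cosh x := by
    rw [div_le_iff₀ hx]
    have := aux_sinh_le x hx.le
    linarith
  have hQx : Qf (Real.sinh x / x) (Real.cosh x) x = (Real.cosh x - 1)^2 := by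
    unfold Qf
    have hSx : Real.sinh x ≠ 0 := ne_of_gt hsx
    field_simp
    ring
  have := aux_Qmono (Real.sinh x / x) (Real.cosh x) x hb hbc hx self_mem_Ici hxk hxk
  rw [hQx] at this
  exact le_trans (sq_nonneg _) this

lemma aux_E (a k : ℝ) (ha0 : 0 < a) (ha1 : a ≤ 1) (hk : 0 < k) :
    0 ≤ (Real.sinh (k*a)/a)^2
      + (Real.sinh (k*a)/a) * Real.cosh (k*a) * Real.sinh k * Real.cosh k
      - 2 * Real.cosh (k*a) * Real.sinh k^2 := by
  have hx : 0 < k*a := mul_pos hk ha0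
  have hxk : k*a ≤ k := by nlinarith
  have hQ := aux_key (k*a) k hx hxk
  have hS : Real.sinh k ≠ 0 := by positivity
  have hE : (Real.sinh (k*a)/a)^2
      + (Real.sinh (k*a)/a) * Real.cosh (k*a) * Real.sinh k * Real.cosh k
      - 2 * Real.cosh (k*a) * Real.sinh k^2
      = Real.sinh k^2 * Qf (Real.sinh (k*a) / (k*a)) (Real.cosh (k*a)) k := by
    unfold Qf
    field_simp
  rw [hE]
  positivity

noncomputable def Psi (a m : ℝ) : ℝ → ℝ :=
  fun k => m / (Real.sinh (k*a)/a)^2 + Real.cosh k / (Real.sinh k * (Real.sinh (k*a)/a))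

lemma aux_sinh_convex (a k : ℝ) (ha0 : 0 ≤ a) (ha1 : a ≤ 1) (hk : 0 ≤ k) :
    Real.sinh (k*a) ≤ a * Real.sinh k := by
  have h : MonotoneOn (fun k => a * Real.sinh k - Real.sinh (k*a)) (Ici 0) := by
    apply monotoneOn_of_deriv_nonneg (convex_Ici 0)
    · fun_prop
    · apply Differentiable.differentiableOn; fun_prop
    · intro t ht
      rw [interior_Ici, mem_Ioi] at ht
      have hd : HasDerivAt (fun k : ℝ => a * Real.sinh k - Real.sinh (k*a))
          (a * Real.cosh t - Real.cosh (t*a) * a) t := by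
        have h1 : HasDerivAt (fun k : ℝ => Real.sinh (k*a)) (Real.cosh (t*a) * a) t :=
          HasDerivAt.comp (h₂ := Real.sinh) t (Real.hasDerivAt_sinh (t*a)) (hasDerivAt_mul_const a)
        exact ((Real.hasDerivAt_sinh t).const_mul a).sub h1
      rw [hd.deriv]
      have hcc : Real.cosh (t*a) ≤ Real.cosh t := by
        rw [Real.cosh_le_cosh]
        rw [abs_of_nonneg (mul_nonneg ht.le ha0), abs_of_nonneg ht.le]
        nlinarith
      nlinarith
  have := h self_mem_Ici hk hk
  simp only [zero_mul, Real.sinh_zero, mul_zero, sub_zero] at this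
  linarith

lemma aux_g_deriv (a k : ℝ) (ha0 : 0 < a) :
    HasDerivAt (fun k => Real.sinh (k*a)/a) (Real.cosh (k*a)) k := by
  have h1 : HasDerivAt (fun k : ℝ => Real.sinh (k*a)) (Real.cosh (k*a) * a) k :=
    HasDerivAt.comp (h₂ := Real.sinh) k (Real.hasDerivAt_sinh (k*a)) (hasDerivAt_mul_const a)
  have := h1.div_const a
  refine this.congr_deriv (Eq.symm ?_)
  field_simp

lemma aux_psi_deriv (a m k : ℝ) (ha0 : 0 < a) (hk : 0 < k) :
    HasDerivAt (Psi a m)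
      (-((2*(m+1)*Real.cosh (k*a)*Real.sinh k^2
          + ((Real.sinh (k*a)/a)^2
            + (Real.sinh (k*a)/a) * Real.cosh (k*a) * Real.sinh k * Real.cosh k
            - 2 * Real.cosh (k*a) * Real.sinh k^2))
        / (Real.sinh k^2 * (Real.sinh (k*a)/a)^3))) k := by
  have hS : Real.sinh k ≠ 0 := by positivity
  have hg0 : 0 < Real.sinh (k*a)/a := by
    have : 0 < Real.sinh (k*a) := Real.sinh_pos_iff.mpr (mul_pos hk ha0)
    positivity
  have hg : Real.sinh (k*a)/a ≠ 0 := ne_of_gt hg0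
  have hgd := aux_g_deriv a k ha0
  have h1 : HasDerivAt (fun k => m / (Real.sinh (k*a)/a)^2)
      ((0 * (Real.sinh (k*a)/a)^2 - m * (2 * (Real.sinh (k*a)/a)^1 * Real.cosh (k*a)))
        / ((Real.sinh (k*a)/a)^2)^2) k := by
    exact (hasDerivAt_const k m).div (hgd.pow 2) (by positivity)
  have h2 : HasDerivAt (fun k => Real.cosh k / (Real.sinh k * (Real.sinh (k*a)/a)))
      ((Real.sinh k * (Real.sinh k * (Real.sinh (k*a)/a))
        - Real.cosh k * (Real.cosh k * (Real.sinh (k*a)/a) + Real.sinh k * Real.cosh (k*a)))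
        / (Real.sinh k * (Real.sinh (k*a)/a))^2) k := by
    exact (Real.hasDerivAt_cosh k).div ((Real.hasDerivAt_sinh k).mul hgd)
      (by positivity)
  have := h1.add h2
  refine this.congr_deriv (Eq.symm ?_)
  have hC2 : Real.cosh k^2 = Real.sinh k^2 + 1 := Real.cosh_sq k
  field_simp
  linear_combination (Real.sinh (k*a)^2) * hC2

lemma aux_psi_anti (a m : ℝ) (ha0 : 0 < a) (ha1 : a ≤ 1) (hm : 0 < m + 1) :
    StrictAntiOn (Psi a m) (Ioi 0) := by
  apply strictAntiOn_of_deriv_neg (convex_Ioi 0)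
  · intro k hk
    exact (aux_psi_deriv a m k ha0 hk).continuousAt.continuousWithinAt
  · intro k hk
    rw [interior_Ioi, mem_Ioi] at hk
    rw [(aux_psi_deriv a m k ha0 hk).deriv]
    have hE := aux_E a k ha0 ha1 hk
    have hS : 0 < Real.sinh k := Real.sinh_pos_iff.mpr hk
    have hg0 : 0 < Real.sinh (k*a)/a := by
      have : 0 < Real.sinh (k*a) := Real.sinh_pos_iff.mpr (mul_pos hk ha0)
      positivity
    have hc : 0 < Real.cosh (k*a) := Real.cosh_pos (k*a)
    have hnum : 0 < 2*(m+1)*Real.cosh (k*a)*Real.sinh k^2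
          + ((Real.sinh (k*a)/a)^2
            + (Real.sinh (k*a)/a) * Real.cosh (k*a) * Real.sinh k * Real.cosh k
            - 2 * Real.cosh (k*a) * Real.sinh k^2) := by
      have : 0 < 2*(m+1)*Real.cosh (k*a)*Real.sinh k^2 := by positivity
      linarith
    have hden : 0 < Real.sinh k^2 * (Real.sinh (k*a)/a)^3 := by positivity
    exact neg_neg_of_pos (div_pos hnum hden)


lemma aux_psi_lb (a m k : ℝ) (ha0 : 0 < a) (ha1 : a ≤ 1) (hk : 0 < k) (hm : 0 < m + 1) :
    (m+1)/(Real.sinh k)^2 ≤ Psi a m k := by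
  have hS : 0 < Real.sinh k := Real.sinh_pos_iff.mpr hk
  have hga : 0 < Real.sinh (k*a) := Real.sinh_pos_iff.mpr (mul_pos hk ha0)
  have hg0 : 0 < Real.sinh (k*a)/a := by positivity
  have hgk : k ≤ Real.sinh (k*a)/a := by
    rw [le_div_iff₀ ha0]
    exact Real.self_le_sinh_iff.mpr (mul_pos hk ha0).le
  have hgS : Real.sinh (k*a)/a ≤ Real.sinh k := by
    rw [div_le_iff₀ ha0]
    have := aux_sinh_convex a k ha0.le ha1 hk.le
    linarith
  have hC : 0 < Real.cosh k := Real.cosh_pos k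
  have hSkC : Real.sinh k ≤ k * Real.cosh k := aux_sinh_le k hk.le
  have h1 : 1/(Real.sinh (k*a)/a)^2 ≤ Real.cosh k / (Real.sinh k * (Real.sinh (k*a)/a)) := by
    rw [div_le_div_iff₀ (by positivity) (by positivity)]
    nlinarith [mul_le_mul_of_nonneg_right hSkC hg0.le,
      mul_le_mul_of_nonneg_right (mul_le_mul_of_nonneg_right hgk hC.le) hg0.le]
  have h2 : (m+1)/(Real.sinh k)^2 ≤ (m+1)/(Real.sinh (k*a)/a)^2 := by gcongr
  have h3 : (m+1)/(Real.sinh (k*a)/a)^2 = m/(Real.sinh (k*a)/a)^2 + 1/(Real.sinh (k*a)/a)^2 := by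
    ring
  unfold Psi
  rw [h3] at h2
  linarith

lemma aux_coth (k : ℝ) (hk : 0 < k) : k * Real.cosh k ≤ (k+1) * Real.sinh k := by
  have hp : (0:ℝ) < Real.exp k := Real.exp_pos k
  have h2k : 2*k + 1 ≤ Real.exp k * Real.exp k := by
    have h := Real.add_one_le_exp (2*k)
    rw [two_mul, Real.exp_add] at h
    linarith
  rw [Real.sinh_eq, Real.cosh_eq, Real.exp_neg]
  have hEi : Real.exp k * (Real.exp k)⁻¹ = 1 := mul_inv_cancel₀ (ne_of_gt hp)
  have hIp : (0:ℝ) < (Real.exp k)⁻¹ := inv_pos.mpr hp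
  nlinarith [mul_le_mul_of_nonneg_right h2k hIp.le]

lemma aux_psi_ub (a m k : ℝ) (ha0 : 0 < a) (hk1 : 1 ≤ k) :
    Psi a m k ≤ (|m| + 2)/k := by
  have hk : 0 < k := lt_of_lt_of_le one_pos hk1
  have hS : 0 < Real.sinh k := Real.sinh_pos_iff.mpr hk
  have hga : 0 < Real.sinh (k*a) := Real.sinh_pos_iff.mpr (mul_pos hk ha0)
  have hg0 : 0 < Real.sinh (k*a)/a := by positivity
  have hgk : k ≤ Real.sinh (k*a)/a := by
    rw [le_div_iff₀ ha0]
    exact Real.self_le_sinh_iff.mpr (mul_pos hk ha0).le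
  have hC : 0 < Real.cosh k := Real.cosh_pos k
  have h1 : m/(Real.sinh (k*a)/a)^2 ≤ |m|/k := by
    calc m/(Real.sinh (k*a)/a)^2 ≤ |m|/(Real.sinh (k*a)/a)^2 := by
          gcongr
          exact le_abs_self m
      _ ≤ |m|/k := by
          apply div_le_div_of_nonneg_left (abs_nonneg m) (by positivity)
          nlinarith
  have h2 : Real.cosh k / (Real.sinh k * (Real.sinh (k*a)/a)) ≤ 2/k := by
    have hcoth := aux_coth k hk
    rw [div_le_div_iff₀ (by positivity) hk]
    nlinarith [mul_le_mul_of_nonneg_left hgk hS.le]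
  calc Psi a m k ≤ |m|/k + 2/k := add_le_add h1 h2
    _ = (|m| + 2)/k := by ring

/-- Robin boundary conditions, Case III (`n > 0`, `m + 1 > 0`, `0 < Δx ≤ 1`): the
hyperbolic characteristic function `f(k) = (m − n·sh(k)²)·tanh(k) + sh(k)`, with
`sh(k) = sinh(kΔx)/Δx`, has exactly one positive root. -/
theorem robin_case_III_unique_positive_root
    (Δx m n : ℝ) (hΔx0 : 0 < Δx) (hΔx1 : Δx ≤ 1) (hn : 0 < n) (hm : 0 < m + 1)
    (sh : ℝ → ℝ) (hsh : ∀ k, sh k = Real.sinh (k * Δx) / Δx)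
    (f : ℝ → ℝ) (hf : ∀ k, f k = (m - n * sh k ^ 2) * Real.tanh k + sh k) :
    ∃! k : ℝ, 0 < k ∧ f k = 0 := by
  have key : ∀ k, 0 < k → (f k = 0 ↔ Psi Δx m k = n) := by
    intro k hk
    have hS : 0 < Real.sinh k := Real.sinh_pos_iff.mpr hk
    have hC : 0 < Real.cosh k := Real.cosh_pos k
    have hga : 0 < Real.sinh (k*Δx) := Real.sinh_pos_iff.mpr (mul_pos hk hΔx0)
    have hg0 : 0 < Real.sinh (k*Δx)/Δx := by positivity
    have hfk : f k = (Real.sinh k / Real.cosh k) * (Real.sinh (k*Δx)/Δx)^2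
        * (Psi Δx m k - n) := by
      rw [hf, hsh, Real.tanh_eq_sinh_div_cosh]
      unfold Psi
      field_simp
      ring
    rw [hfk]
    constructor
    · intro h
      rcases mul_eq_zero.mp h with h' | h'
      · exfalso
        rcases mul_eq_zero.mp h' with h'' | h''
        · exact absurd h'' (by positivity)
        · exact absurd h'' (by positivity)
      · linarith [sub_eq_zero.mp h']
    · intro h
      rw [h]
      simp
  have anti := aux_psi_anti Δx m hΔx0 hΔx1 hm
  -- lower point
  set k₁ := Real.arsinh (Real.sqrt ((m+1)/(2*n))) with hk₁def
  have hsq : 0 < Real.sqrt ((m+1)/(2*n)) := Real.sqrt_pos.mpr (by positivity)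
  have hk₁pos : 0 < k₁ := Real.arsinh_pos_iff.mpr hsq
  have hΨ1 : n < Psi Δx m k₁ := by
    have hlb := aux_psi_lb Δx m k₁ hΔx0 hΔx1 hk₁pos hm
    have hs1 : Real.sinh k₁ ^ 2 = (m+1)/(2*n) := by
      rw [hk₁def, Real.sinh_arsinh, Real.sq_sqrt (by positivity)]
    rw [hs1] at hlb
    have : (m+1)/((m+1)/(2*n)) = 2*n := by
      field_simp
    rw [this] at hlb
    linarith
  -- upper point
  set k₂ := max 1 ((|m|+2)/n) + 1 with hk₂def
  have hk₂1 : 1 ≤ k₂ := by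
    have := le_max_left 1 ((|m|+2)/n)
    rw [hk₂def]; linarith
  have hk₂pos : 0 < k₂ := lt_of_lt_of_le one_pos hk₂1
  have hΨ2 : Psi Δx m k₂ < n := by
    have hub := aux_psi_ub Δx m k₂ hΔx0 hk₂1
    have h2 : (|m|+2)/k₂ < n := by
      rw [div_lt_iff₀ hk₂pos]
      have := le_max_right 1 ((|m|+2)/n)
      have h3 : (|m|+2)/n < k₂ := by rw [hk₂def]; linarith
      rw [div_lt_iff₀ hn] at h3
      linarith
    linarith
  have hk12 : k₁ < k₂ := by
    by_contra hcon
    push_neg at hcon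
    rcases eq_or_lt_of_le hcon with h | h
    · rw [h] at hΨ2; linarith
    · have := anti (mem_Ioi.mpr hk₂pos) (mem_Ioi.mpr hk₁pos) h
      linarith
  have cont : ContinuousOn (Psi Δx m) (Icc k₁ k₂) := fun k hk =>
    (aux_psi_deriv Δx m k hΔx0 (lt_of_lt_of_le hk₁pos hk.1)).continuousAt.continuousWithinAt
  have hmem : n ∈ Ioo (Psi Δx m k₂) (Psi Δx m k₁) := ⟨hΨ2, hΨ1⟩
  obtain ⟨k₀, hk₀mem, hk₀⟩ := intermediate_value_Ioo' hk12.le cont hmem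
  have hk₀pos : 0 < k₀ := hk₁pos.trans hk₀mem.1
  refine ⟨k₀, ⟨hk₀pos, (key k₀ hk₀pos).mpr hk₀⟩, ?_⟩
  rintro y ⟨hypos, hyf⟩
  have hy : Psi Δx m y = n := (key y hypos).mp hyf
  exact anti.injOn (mem_Ioi.mpr hypos) (mem_Ioi.mpr hk₀pos) (by rw [hy, hk₀])
end

section
/- Let Δx, m, n be real numbers with 0 < Δx ≤ 1, n > 0 and m + 1 < 0. Define sh(k) = sinh(kΔx)/Δx and f(k) = (m − n·sh(k)²)·tanh(k) + sh(k). Then the set {k > 0 : f(k) = 0} has at most two elements. -/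
open Real Set

/-- `sinh x ≤ x * cosh x` for `x ≥ 0`. -/
lemma aux_sinh_le_mul_cosh {x : ℝ} (hx : 0 ≤ x) : Real.sinh x ≤ x * Real.cosh x := by
  have key : MonotoneOn (fun t : ℝ => t * Real.cosh t - Real.sinh t) (Set.Ici 0) := by
    apply monotoneOn_of_deriv_nonneg (convex_Ici 0)
    · fun_prop
    · apply DifferentiableOn.sub
      · exact (differentiable_id.mul Real.differentiable_cosh).differentiableOn
      · exact Real.differentiable_sinh.differentiableOn
    · intro t ht
      rw [interior_Ici] at ht
      have h : HasDerivAt (fun t : ℝ => t * Real.cosh t - Real.sinh t)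
          (1 * Real.cosh t + t * Real.sinh t - Real.cosh t) t :=
        ((hasDerivAt_id t).mul (Real.hasDerivAt_cosh t)).sub (Real.hasDerivAt_sinh t)
      rw [h.deriv]
      have ht' : (0:ℝ) < t := ht
      nlinarith [Real.sinh_pos_iff.2 ht']
  have := key (Set.self_mem_Ici) (Set.mem_Ici.2 hx) hx
  simpa using this

/-- `3 sinh x cosh x ≤ x (2 cosh²x + 1)` for `x ≥ 0`. -/
lemma aux_B {x : ℝ} (hx : 0 ≤ x) :
    3 * Real.sinh x * Real.cosh x ≤ x * (2 * Real.cosh x ^ 2 + 1) := by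
  have key : MonotoneOn
      (fun t : ℝ => t * (2 * Real.cosh t ^ 2 + 1) - 3 * Real.sinh t * Real.cosh t)
      (Set.Ici 0) := by
    apply monotoneOn_of_deriv_nonneg (convex_Ici 0)
    · fun_prop
    · apply DifferentiableOn.sub
      · exact (differentiable_id.mul ((Real.differentiable_cosh.pow 2).const_mul 2 |>.add_const
          1)).differentiableOn
      · exact (((Real.differentiable_sinh.const_mul 3).mul
          Real.differentiable_cosh)).differentiableOn
    · intro t ht
      rw [interior_Ici] at ht
      have ht' : (0:ℝ) < t := ht
      have h := ((hasDerivAt_id t).mul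
          ((((Real.hasDerivAt_cosh t).pow 2).const_mul 2).add_const 1)).sub
          (((Real.hasDerivAt_sinh t).const_mul 3).mul (Real.hasDerivAt_cosh t))
      simp only [id_eq] at h ⊢
      rw [show deriv (fun t : ℝ => t * (2 * Real.cosh t ^ 2 + 1) - 3 * Real.sinh t * Real.cosh t) t
        = _ from h.deriv]
      norm_num
      have hc : Real.cosh t ^ 2 = Real.sinh t ^ 2 + 1 := by
        have := Real.cosh_sq_sub_sinh_sq t; nlinarith [this]
      have hs : Real.sinh t ≤ t * Real.cosh t := aux_sinh_le_mul_cosh ht'.le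
      have hsp : 0 < Real.sinh t := Real.sinh_pos_iff.2 ht'
      nlinarith [hsp, hs]
  have := key (Set.self_mem_Ici) (Set.mem_Ici.2 hx) hx
  simp only [Real.sinh_zero, Real.cosh_zero, zero_mul, mul_zero, sub_zero] at this
  nlinarith [this]

/-- `J(t) = sinh³t / (t³ cosh t)` is monotone on `(0,∞)`. -/
lemma aux_J_mono : MonotoneOn (fun t : ℝ => Real.sinh t ^ 3 / (t ^ 3 * Real.cosh t))
    (Set.Ioi 0) := by
  have hJ : ∀ t ∈ Set.Ioi (0:ℝ), HasDerivAt
      (fun t : ℝ => Real.sinh t ^ 3 / (t ^ 3 * Real.cosh t))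
      ((3 * Real.sinh t ^ (3-1) * Real.cosh t * (t ^ 3 * Real.cosh t)
        - Real.sinh t ^ 3 * ((3 * t ^ (3-1) * 1) * Real.cosh t + t ^ 3 * Real.sinh t))
        / (t ^ 3 * Real.cosh t) ^ 2) t := by
    intro t ht
    have ht' : (0:ℝ) < t := ht
    have hden : t ^ 3 * Real.cosh t ≠ 0 := by positivity
    exact HasDerivAt.div ((Real.hasDerivAt_sinh t).pow 3)
      ((((hasDerivAt_id t).pow 3)).mul (Real.hasDerivAt_cosh t)) hden
  apply monotoneOn_of_deriv_nonneg (convex_Ioi 0)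
  · intro t ht
    exact (hJ t ht).differentiableAt.continuousAt.continuousWithinAt
  · rw [interior_Ioi]
    intro t ht
    exact (hJ t ht).differentiableAt.differentiableWithinAt
  · rw [interior_Ioi]
    intro t ht
    rw [(hJ t ht).deriv]
    norm_num
    have ht' : (0:ℝ) < t := ht
    have hsp : 0 < Real.sinh t := Real.sinh_pos_iff.2 ht'
    have hcp : 0 < Real.cosh t := Real.cosh_pos t
    have hc : Real.cosh t ^ 2 = Real.sinh t ^ 2 + 1 := by
      nlinarith [Real.cosh_sq_sub_sinh_sq t]
    apply div_nonneg _ (sq_nonneg _)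
    have hB := aux_B ht'.le
    have hEq : 3 * Real.sinh t ^ 2 * Real.cosh t * (t ^ 3 * Real.cosh t)
        - Real.sinh t ^ 3 * (3 * t ^ 2 * Real.cosh t + t ^ 3 * Real.sinh t)
        = Real.sinh t ^ 2 * t ^ 2
          * (t * (2 * Real.cosh t ^ 2 + 1) - 3 * Real.sinh t * Real.cosh t) := by
      linear_combination (Real.sinh t ^ 2 * t ^ 3) * hc
    rw [hEq]
    exact mul_nonneg (mul_nonneg (sq_nonneg _) (sq_nonneg _)) (sub_nonneg.2 hB)

/-- Key comparison: for `0 < s ≤ k`, `k³ cosh k sinh³ s ≤ s³ cosh s sinh³ k`. -/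
lemma aux_A {s k : ℝ} (hs : 0 < s) (hsk : s ≤ k) :
    k ^ 3 * Real.cosh k * Real.sinh s ^ 3 ≤ s ^ 3 * Real.cosh s * Real.sinh k ^ 3 := by
  have hk : 0 < k := hs.trans_le hsk
  have h := aux_J_mono (Set.mem_Ioi.2 hs) (Set.mem_Ioi.2 hk) hsk
  rw [div_le_div_iff₀ (by positivity) (by positivity)] at h
  nlinarith [h]

/-- A function strictly convex on `(0,∞)` has at most two positive roots. -/
lemma aux_two_roots {g : ℝ → ℝ} (hg : StrictConvexOn ℝ (Set.Ioi 0) g) :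
    {k : ℝ | 0 < k ∧ g k = 0}.encard ≤ 2 := by
  by_contra hlt
  push_neg at hlt
  obtain ⟨t, hts, hcard⟩ := Set.exists_subset_encard_eq (Order.add_one_le_of_lt hlt)
  rw [(by norm_num : (2:ℕ∞) + 1 = 3), Set.encard_eq_three] at hcard
  obtain ⟨a, b, c, hab, hac, hbc, rfl⟩ := hcard
  have ha' : 0 < a ∧ g a = 0 := hts (by simp)
  have hb' : 0 < b ∧ g b = 0 := hts (by simp)
  have hc' : 0 < c ∧ g c = 0 := hts (by simp)
  have key : ∀ p q r : ℝ, p < q → q < r → (0 < p ∧ g p = 0) → (0 < q ∧ g q = 0) →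
      (0 < r ∧ g r = 0) → False := by
    rintro p q r hpq hqr ⟨hp0, hgp⟩ ⟨hq0, hgq⟩ ⟨hr0, hgr⟩
    have hrp : 0 < r - p := by linarith
    have hα : 0 < (r - q) / (r - p) := by apply div_pos <;> linarith
    have hβ : 0 < (q - p) / (r - p) := by apply div_pos <;> linarith
    have hsum : (r - q) / (r - p) + (q - p) / (r - p) = 1 := by field_simp; ring
    have hlt2 := hg.2 (Set.mem_Ioi.2 hp0) (Set.mem_Ioi.2 hr0)
      (ne_of_lt (hpq.trans hqr)) hα hβ hsum
    simp only [smul_eq_mul] at hlt2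
    have hq' : (r - q) / (r - p) * p + (q - p) / (r - p) * r = q := by
      field_simp; ring
    rw [hq', hgp, hgq, hgr] at hlt2
    simp at hlt2
  rcases lt_trichotomy a b with h1 | h1 | h1
  · rcases lt_trichotomy b c with h2 | h2 | h2
    · exact key a b c h1 h2 ha' hb' hc'
    · exact hbc h2
    · rcases lt_trichotomy a c with h3 | h3 | h3
      · exact key a c b h3 h2 ha' hc' hb'
      · exact hac h3
      · exact key c a b h3 h1 hc' ha' hb'
  · exact hab h1
  · rcases lt_trichotomy a c with h2 | h2 | h2
    · exact key b a c h1 h2 hb' ha' hc'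
    · exact hac h2
    · rcases lt_trichotomy b c with h3 | h3 | h3
      · exact key b c a h3 h2 hb' hc' ha'
      · exact hbc h3
      · exact key c b a h3 h1 hc' hb' ha'

/-- Strict convexity of the auxiliary function on `(0,∞)`. -/
lemma aux_convex (Δx a n : ℝ) (hΔx0 : 0 < Δx) (hΔx1 : Δx ≤ 1) (hn : 0 < n) (ha : 1 ≤ a) :
    StrictConvexOn ℝ (Set.Ioi 0)
      (fun x => n / Δx * Real.sinh (x * Δx) + a * Δx / Real.sinh (x * Δx)
        - Real.cosh x / Real.sinh x) := by
  set g : ℝ → ℝ := fun x => n / Δx * Real.sinh (x * Δx) + a * Δx / Real.sinh (x * Δx)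
    - Real.cosh x / Real.sinh x with hg_def
  set g1 : ℝ → ℝ := fun x => n * Real.cosh (x * Δx)
    - a * Δx ^ 2 * Real.cosh (x * Δx) / Real.sinh (x * Δx) ^ 2 + 1 / Real.sinh x ^ 2 with hg1_def
  set g2 : ℝ → ℝ := fun x => n * Δx * Real.sinh (x * Δx)
    + a * Δx ^ 3 * (2 * Real.cosh (x * Δx) ^ 2 - Real.sinh (x * Δx) ^ 2)
        / Real.sinh (x * Δx) ^ 3
    - 2 * Real.cosh x / Real.sinh x ^ 3 with hg2_def
  have Hg : ∀ x ∈ Set.Ioi (0:ℝ), HasDerivAt g (g1 x) x := by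
    intro x hx
    have hx' : (0:ℝ) < x := hx
    have hsx : 0 < Real.sinh x := Real.sinh_pos_iff.2 hx'
    have hss : 0 < Real.sinh (x * Δx) := Real.sinh_pos_iff.2 (by positivity)
    have hlin : HasDerivAt (fun y : ℝ => y * Δx) Δx x := hasDerivAt_mul_const Δx
    have hS := hlin.sinh
    have h1 := hS.const_mul (n / Δx)
    have h2 := (hasDerivAt_const x (a * Δx)).div hS hss.ne'
    have h3 : HasDerivAt (fun y => Real.cosh y / Real.sinh y) (-(1 / Real.sinh x ^ 2)) x := by
      have h := (Real.hasDerivAt_cosh x).div (Real.hasDerivAt_sinh x) hsx.ne'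
      refine h.congr_deriv (Eq.symm ?_)
      have hp := Real.cosh_sq_sub_sinh_sq x
      field_simp
      linear_combination hp
    have H := (h1.add h2).sub h3
    refine H.congr_deriv (Eq.symm ?_)
    rw [hg1_def]
    field_simp
    ring
  have Hg1 : ∀ x ∈ Set.Ioi (0:ℝ), HasDerivAt g1 (g2 x) x := by
    intro x hx
    have hx' : (0:ℝ) < x := hx
    have hsx : 0 < Real.sinh x := Real.sinh_pos_iff.2 hx'
    have hss : 0 < Real.sinh (x * Δx) := Real.sinh_pos_iff.2 (by positivity)
    have hlin : HasDerivAt (fun y : ℝ => y * Δx) Δx x := hasDerivAt_mul_const Δx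
    have hS := hlin.sinh
    have hC := hlin.cosh
    have term1 := hC.const_mul n
    have term2 := (hC.const_mul (a * Δx ^ 2)).div (hS.pow 2) (pow_ne_zero 2 hss.ne')
    have term3 := (hasDerivAt_const x (1:ℝ)).div ((Real.hasDerivAt_sinh x).pow 2)
      (pow_ne_zero 2 hsx.ne')
    have H := (term1.sub term2).add term3
    refine H.congr_deriv (Eq.symm ?_)
    rw [hg2_def]
    simp only [Pi.pow_apply]
    field_simp
    ring
  apply strictConvexOn_of_deriv2_pos (convex_Ioi 0)
  · intro x hx
    exact (Hg x hx).differentiableAt.continuousAt.continuousWithinAt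
  · rw [interior_Ioi]
    intro x hx
    have hx' : (0:ℝ) < x := hx
    have hd2 : deriv^[2] g x = g2 x := by
      have hev : deriv g =ᶠ[nhds x] g1 :=
        Filter.eventuallyEq_of_mem (isOpen_Ioi.mem_nhds hx) (fun y hy => (Hg y hy).deriv)
      have : deriv (deriv g) x = deriv g1 x := hev.deriv_eq
      simp only [Function.iterate_succ, Function.iterate_zero, Function.comp_apply, id_eq]
      rw [this, (Hg1 x hx).deriv]
    rw [hd2, hg2_def]
    -- positivity of the second derivative
    have hsx : 0 < Real.sinh x := Real.sinh_pos_iff.2 hx'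
    have hcx : 0 < Real.cosh x := Real.cosh_pos x
    have hs0 : 0 < x * Δx := by positivity
    have hss : 0 < Real.sinh (x * Δx) := Real.sinh_pos_iff.2 hs0
    have hcs : 0 < Real.cosh (x * Δx) := Real.cosh_pos _
    have hA : x ^ 3 * Real.cosh x * Real.sinh (x * Δx) ^ 3
        ≤ (x * Δx) ^ 3 * Real.cosh (x * Δx) * Real.sinh x ^ 3 :=
      aux_A hs0 (by nlinarith)
    have hp := Real.cosh_sq_sub_sinh_sq (x * Δx)
    have h2C : 2 * Real.cosh (x * Δx) ≤ 2 * Real.cosh (x * Δx) ^ 2 - Real.sinh (x * Δx) ^ 2 := by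
      nlinarith [sq_nonneg (Real.cosh (x * Δx) - 1)]
    have key : 2 * Real.cosh x / Real.sinh x ^ 3
        ≤ a * Δx ^ 3 * (2 * Real.cosh (x * Δx) ^ 2 - Real.sinh (x * Δx) ^ 2)
          / Real.sinh (x * Δx) ^ 3 := by
      rw [div_le_div_iff₀ (by positivity) (by positivity)]
      have hx3 : 0 < x ^ 3 := by positivity
      rw [← mul_le_mul_iff_right₀ hx3]
      have e1 : x ^ 3 * (a * Δx ^ 3 * (2 * Real.cosh (x * Δx) ^ 2 - Real.sinh (x * Δx) ^ 2)
          * Real.sinh x ^ 3)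
          = a * ((x * Δx) ^ 3 * (2 * Real.cosh (x * Δx) ^ 2 - Real.sinh (x * Δx) ^ 2)
            * Real.sinh x ^ 3) := by ring
      rw [e1]
      have h2 : (x * Δx) ^ 3 * (2 * Real.cosh (x * Δx)) * Real.sinh x ^ 3
          ≤ (x * Δx) ^ 3 * (2 * Real.cosh (x * Δx) ^ 2 - Real.sinh (x * Δx) ^ 2)
            * Real.sinh x ^ 3 := by
        have hpos : 0 < (x * Δx) ^ 3 * Real.sinh x ^ 3 := by positivity
        nlinarith [mul_le_mul_of_nonneg_left h2C hpos.le]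
      have h3 : x ^ 3 * (2 * Real.cosh x * Real.sinh (x * Δx) ^ 3)
          ≤ (x * Δx) ^ 3 * (2 * Real.cosh (x * Δx)) * Real.sinh x ^ 3 := by nlinarith [hA]
      have hfac : (0:ℝ) ≤ (x * Δx) ^ 3 * (2 * Real.cosh (x * Δx) ^ 2 - Real.sinh (x * Δx) ^ 2)
          * Real.sinh x ^ 3 := by
        have hpos2 : 0 < 2 * Real.cosh (x * Δx) ^ 2 - Real.sinh (x * Δx) ^ 2 := by
          nlinarith [hcs]
        exact mul_nonneg (mul_nonneg (by positivity) hpos2.le) (by positivity)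
      have h4 : (x * Δx) ^ 3 * (2 * Real.cosh (x * Δx) ^ 2 - Real.sinh (x * Δx) ^ 2)
          * Real.sinh x ^ 3
          ≤ a * ((x * Δx) ^ 3 * (2 * Real.cosh (x * Δx) ^ 2 - Real.sinh (x * Δx) ^ 2)
            * Real.sinh x ^ 3) := by
        nlinarith [mul_le_mul_of_nonneg_right ha hfac]
      linarith [h2, h3, h4]
    have hterm1 : 0 < n * Δx * Real.sinh (x * Δx) := by positivity
    simp only []
    linarith [key, hterm1]

/-- Robin boundary conditions, Case IV (`n > 0`, `m + 1 < 0`, `0 < Δx ≤ 1`): the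
hyperbolic characteristic function `f(k) = (m − n·sh(k)²)·tanh(k) + sh(k)`, with
`sh(k) = sinh(kΔx)/Δx`, has at most two positive roots. -/
theorem robin_case_IV_at_most_two_positive_roots
    (Δx m n : ℝ) (hΔx0 : 0 < Δx) (hΔx1 : Δx ≤ 1) (hn : 0 < n) (hm : m + 1 < 0)
    (sh : ℝ → ℝ) (hsh : ∀ k, sh k = Real.sinh (k * Δx) / Δx)
    (f : ℝ → ℝ) (hf : ∀ k, f k = (m - n * sh k ^ 2) * Real.tanh k + sh k) :
    {k : ℝ | 0 < k ∧ f k = 0}.encard ≤ 2 := by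
  set g : ℝ → ℝ := fun x => n / Δx * Real.sinh (x * Δx) + (-m) * Δx / Real.sinh (x * Δx)
    - Real.cosh x / Real.sinh x with hg_def
  have hsub : {k : ℝ | 0 < k ∧ f k = 0} ⊆ {k : ℝ | 0 < k ∧ g k = 0} := by
    rintro k ⟨hk, hfk⟩
    refine ⟨hk, ?_⟩
    have hsx : 0 < Real.sinh k := Real.sinh_pos_iff.2 hk
    have hcx : 0 < Real.cosh k := Real.cosh_pos k
    have hss : 0 < Real.sinh (k * Δx) := Real.sinh_pos_iff.2 (by positivity)
    rw [hf, hsh, Real.tanh_eq_sinh_div_cosh] at hfk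
    rw [hg_def]
    field_simp at hfk ⊢
    have hΔ : Δx ≠ 0 := ne_of_gt hΔx0
    have hfk' : (m * Δx ^ 2 - n * Real.sinh (k * Δx) ^ 2) * Real.sinh k
        + Real.sinh (k * Δx) * Δx * Real.cosh k = 0 := by
      apply mul_left_cancel₀ hΔ
      rw [mul_zero]
      linear_combination Δx * hfk
    linear_combination -hfk'
  calc {k : ℝ | 0 < k ∧ f k = 0}.encard ≤ {k : ℝ | 0 < k ∧ g k = 0}.encard :=
        Set.encard_mono hsub
    _ ≤ 2 := aux_two_roots (aux_convex Δx (-m) n hΔx0 hΔx1 hn (by linarith))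
end

section
/- Let Δx > 0 and n be real numbers, set sh(k) = sinh(kΔx)/Δx, and define f(k) = (−1 − n·sh(k)²)·tanh(k) + sh(k) (the case m = −1). Then f(0) = 0, f'(0) = 0, f''(0) = 0, and f'''(0) = 2 − 6n + Δx², where the derivatives are the first, second and third derivatives of f at 0. -/
private lemma tanh_hasDerivAt (x : ℝ) :
    HasDerivAt Real.tanh (1 - Real.tanh x ^ 2) x := by
  have hc : Real.cosh x ≠ 0 := (Real.cosh_pos x).ne'
  have h := (Real.hasDerivAt_sinh x).div (Real.hasDerivAt_cosh x) hc
  have he : Real.tanh = Real.sinh / Real.cosh :=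
    funext fun x => Real.tanh_eq_sinh_div_cosh x
  rw [← he] at h
  have : (Real.cosh x * Real.cosh x - Real.sinh x * Real.sinh x) / Real.cosh x ^ 2
      = 1 - Real.tanh x ^ 2 := by
    rw [Real.tanh_eq_sinh_div_cosh]
    field_simp
  rwa [this] at h

/-- Robin boundary conditions, degenerate case `m = −1`: the function
`f(k) = (−1 − n·sh(k)²)·tanh(k) + sh(k)`, with `sh(k) = sinh(kΔx)/Δx`, satisfies
`f(0) = 0`, `f'(0) = 0`, `f''(0) = 0` and `f'''(0) = 2 − 6n + Δx²`. -/
theorem robin_degenerate_third_order_root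
    (Δx n : ℝ) (hΔx : 0 < Δx)
    (sh : ℝ → ℝ) (hsh : ∀ k, sh k = Real.sinh (k * Δx) / Δx)
    (f : ℝ → ℝ) (hf : ∀ k, f k = (-1 - n * sh k ^ 2) * Real.tanh k + sh k) :
    f 0 = 0 ∧ deriv f 0 = 0 ∧ iteratedDeriv 2 f 0 = 0 ∧
    iteratedDeriv 3 f 0 = 2 - 6 * n + Δx ^ 2 := by
  have hΔ : Δx ≠ 0 := hΔx.ne'
  have hfe : f = fun k =>
      (-1 - n * (Real.sinh (k * Δx) / Δx) ^ 2) * Real.tanh k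
        + Real.sinh (k * Δx) / Δx := by
    funext k; rw [hf, hsh]
  -- basic derivatives
  have hSh : ∀ k : ℝ, HasDerivAt (fun k => Real.sinh (k * Δx))
      (Real.cosh (k * Δx) * Δx) k := fun k => by
    simpa [Function.comp_def] using (Real.hasDerivAt_sinh (k * Δx)).comp k
      ((hasDerivAt_id k).mul_const Δx)
  have hS : ∀ k : ℝ, HasDerivAt (fun k => Real.sinh (k * Δx) / Δx)
      (Real.cosh (k * Δx)) k := fun k => by
    have h := (hSh k).div_const Δx
    have : Real.cosh (k * Δx) * Δx / Δx = Real.cosh (k * Δx) := by field_simp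
    rwa [this] at h
  have hC : ∀ k : ℝ, HasDerivAt (fun k => Real.cosh (k * Δx))
      (Δx * Real.sinh (k * Δx)) k := fun k => by
    have h := (Real.hasDerivAt_cosh (k * Δx)).comp k ((hasDerivAt_id k).mul_const Δx)
    simpa [mul_comm, Function.comp_def] using h
  have hT2 : ∀ k : ℝ, HasDerivAt (fun k => 1 - Real.tanh k ^ 2)
      (-(2 * Real.tanh k * (1 - Real.tanh k ^ 2))) k := fun k => by
    have h := (hasDerivAt_const k (1 : ℝ)).sub ((tanh_hasDerivAt k).pow 2)
    refine h.congr_deriv ?_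
    ring
  -- first derivative
  have hD1 : ∀ k : ℝ, HasDerivAt f
      (-(n * (2 * (Real.sinh (k * Δx) / Δx * Real.cosh (k * Δx)))) * Real.tanh k
        + (-1 - n * (Real.sinh (k * Δx) / Δx) ^ 2) * (1 - Real.tanh k ^ 2)
        + Real.cosh (k * Δx)) k := fun k => by
    rw [hfe]
    have h := (((hasDerivAt_const k (-1 : ℝ)).sub
        (((hS k).pow 2).const_mul n)).mul (tanh_hasDerivAt k)).add (hS k)
    refine h.congr_deriv ?_
    simp only [Pi.add_apply, Pi.sub_apply, Pi.mul_apply, Pi.pow_apply, Pi.neg_apply]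
    ring
  have hd1 : deriv f = fun k =>
      -(n * (2 * (Real.sinh (k * Δx) / Δx * Real.cosh (k * Δx)))) * Real.tanh k
        + (-1 - n * (Real.sinh (k * Δx) / Δx) ^ 2) * (1 - Real.tanh k ^ 2)
        + Real.cosh (k * Δx) := funext fun k => (hD1 k).deriv
  -- second derivative
  have hD2 : ∀ k : ℝ, HasDerivAt (fun k =>
      -(n * (2 * (Real.sinh (k * Δx) / Δx * Real.cosh (k * Δx)))) * Real.tanh k
        + (-1 - n * (Real.sinh (k * Δx) / Δx) ^ 2) * (1 - Real.tanh k ^ 2)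
        + Real.cosh (k * Δx))
      (-(n * (2 * (Real.cosh (k * Δx) ^ 2
            + Real.sinh (k * Δx) / Δx * (Δx * Real.sinh (k * Δx))))) * Real.tanh k
        + -(n * (4 * (Real.sinh (k * Δx) / Δx * Real.cosh (k * Δx))))
            * (1 - Real.tanh k ^ 2)
        + (2 + 2 * (n * (Real.sinh (k * Δx) / Δx) ^ 2))
            * (Real.tanh k * (1 - Real.tanh k ^ 2))
        + Δx * Real.sinh (k * Δx)) k := fun k => by
    have h := (((((((hS k).mul (hC k)).const_mul 2).const_mul n).neg).mul
          (tanh_hasDerivAt k)).add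
        (((hasDerivAt_const k (-1 : ℝ)).sub
          (((hS k).pow 2).const_mul n)).mul (hT2 k))).add (hC k)
    refine h.congr_deriv ?_
    simp only [Pi.add_apply, Pi.sub_apply, Pi.mul_apply, Pi.pow_apply, Pi.neg_apply]
    ring
  have hd2 : deriv (deriv f) = fun k =>
      -(n * (2 * (Real.cosh (k * Δx) ^ 2
            + Real.sinh (k * Δx) / Δx * (Δx * Real.sinh (k * Δx))))) * Real.tanh k
        + -(n * (4 * (Real.sinh (k * Δx) / Δx * Real.cosh (k * Δx))))
            * (1 - Real.tanh k ^ 2)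
        + (2 + 2 * (n * (Real.sinh (k * Δx) / Δx) ^ 2))
            * (Real.tanh k * (1 - Real.tanh k ^ 2))
        + Δx * Real.sinh (k * Δx) := by
    rw [hd1]; exact funext fun k => (hD2 k).deriv
  -- third derivative at 0
  have hD3 : HasDerivAt (fun k =>
      -(n * (2 * (Real.cosh (k * Δx) ^ 2
            + Real.sinh (k * Δx) / Δx * (Δx * Real.sinh (k * Δx))))) * Real.tanh k
        + -(n * (4 * (Real.sinh (k * Δx) / Δx * Real.cosh (k * Δx))))
            * (1 - Real.tanh k ^ 2)
        + (2 + 2 * (n * (Real.sinh (k * Δx) / Δx) ^ 2))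
            * (Real.tanh k * (1 - Real.tanh k ^ 2))
        + Δx * Real.sinh (k * Δx))
      (2 - 6 * n + Δx ^ 2) 0 := by
    have h1 := ((((((hC 0).pow 2).add
        ((hS 0).mul ((hSh 0).const_mul Δx))).const_mul 2).const_mul n).neg).mul
        (tanh_hasDerivAt 0)
    have h2 := (((((hS 0).mul (hC 0)).const_mul 4).const_mul n).neg).mul (hT2 0)
    have h3 := ((hasDerivAt_const (0:ℝ) (2:ℝ)).add
        ((((hS 0).pow 2).const_mul n).const_mul 2)).mul
        ((tanh_hasDerivAt 0).mul (hT2 0))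
    have h4 := (hSh 0).const_mul Δx
    have h := ((h1.add h2).add h3).add h4
    refine h.congr_deriv ?_
    simp only [Pi.add_apply, Pi.sub_apply, Pi.mul_apply, Pi.pow_apply, Pi.neg_apply, Real.tanh_zero, Real.sinh_zero, Real.cosh_zero, zero_mul, mul_zero,
      zero_div, sub_zero, add_zero, zero_add, one_pow, mul_one, one_mul]
    ring
  refine ⟨?_, ?_, ?_, ?_⟩
  · rw [hf, hsh]; simp
  · rw [(hD1 0).deriv]; simp
  · rw [iteratedDeriv_succ, iteratedDeriv_one, hd2]; simp
  · rw [iteratedDeriv_succ, iteratedDeriv_succ, iteratedDeriv_one, hd2]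
    exact hD3.deriv
end
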